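/- arXiv:1204.4621 — 9 statements merged into one kernel-verified Lean document; each statement's English description precedes it below -/
import Mathlib

section
/- Every infinite-dimensional Banach space contains a closed subspace Y such that both Y and the quotient X/Y are infinite-dimensional (i.e., a half-space). -/
section Aux
variable {X : Type*} [NormedAddCommGroup X] [NormedSpace ℂ X]

/-- Nonzero vector killed by finitely many functionals. -/
lemma aux_exists_ker (hX : ¬ FiniteDimensional ℂ X) (n : ℕ) (f : Fin n → (X →L[ℂ] ℂ)) :
    ∃ x : X, x ≠ 0 ∧ ∀ i, f i x = 0 := by
  by_contra h
  push_neg at h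
  have hinj : Function.Injective
      (LinearMap.pi (fun i => (f i : X →ₗ[ℂ] ℂ)) : X →ₗ[ℂ] (Fin n → ℂ)) := by
    rw [← LinearMap.ker_eq_bot, LinearMap.ker_eq_bot']
    intro x hx
    by_contra hx0
    obtain ⟨i, hi⟩ := h x hx0
    exact hi (congrFun hx i)
  exact hX (FiniteDimensional.of_injective _ hinj)

/-- Hahn-Banach: functional that is 1 at `x` and kills a finite-dimensional subspace. -/
lemma aux_functional (K : Submodule ℂ X) [FiniteDimensional ℂ K] {x : X} (hx : x ∉ K) :
    ∃ f : X →L[ℂ] ℂ, f x = 1 ∧ ∀ y ∈ K, f y = 0 := by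
  haveI : IsClosed (K : Set X) := K.closed_of_finiteDimensional
  have hπx : (Submodule.Quotient.mk x : X ⧸ K) ≠ 0 := by
    simpa [Submodule.Quotient.mk_eq_zero] using hx
  obtain ⟨g, hg⟩ := SeparatingDual.exists_eq_one (R := ℂ) hπx
  have hcont : Continuous (K.mkQ) :=
    (AddSubgroup.normedMk K.toAddSubgroup).continuous
  refine ⟨g.comp ⟨K.mkQ, hcont⟩, ?_, ?_⟩
  · simpa using hg
  · intro y hy
    have : (Submodule.Quotient.mk y : X ⧸ K) = 0 := (Submodule.Quotient.mk_eq_zero K).2 hy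
    simp [this]


def AuxBiorth {n : ℕ} (E : Fin n → X × (X →L[ℂ] ℂ)) : Prop :=
  ∀ i j, (E i).2 (E j).1 = if i = j then 1 else 0

lemma aux_step (hX : ¬ FiniteDimensional ℂ X) {n : ℕ} (E : Fin n → X × (X →L[ℂ] ℂ))
    (hE : AuxBiorth E) : ∃ p : X × (X →L[ℂ] ℂ), AuxBiorth (Fin.snoc E p) := by
  obtain ⟨x, hx0, hxk⟩ := aux_exists_ker hX n (fun i => (E i).2)
  set K : Submodule ℂ X := Submodule.span ℂ (Set.range (fun i => (E i).1)) with hK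
  haveI : FiniteDimensional ℂ K := FiniteDimensional.span_of_finite ℂ (Set.finite_range _)
  have hxK : x ∉ K := by
    intro hmem
    rw [hK, Submodule.mem_span_range_iff_exists_fun ℂ] at hmem
    obtain ⟨c, hc⟩ := hmem
    have hz : ∀ j, c j = 0 := by
      intro j
      have := congrArg (fun y => (E j).2 y) hc
      simp only [map_sum, map_smul, smul_eq_mul] at this
      rw [Finset.sum_congr rfl (fun i _ => by rw [hE j i])] at this
      simp only [mul_ite, mul_one, mul_zero, Finset.sum_ite_eq, Finset.mem_univ,
        if_true] at this
      rw [hxk j] at this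
      exact this
    apply hx0
    rw [← hc]
    simp [hz]
  obtain ⟨f, hf1, hf0⟩ := aux_functional K hxK
  refine ⟨(x, f), ?_⟩
  intro i j
  refine Fin.lastCases ?_ ?_ i <;> [skip; intro i'] <;>
    refine Fin.lastCases ?_ ?_ j <;> try intro j'
  · simp [Fin.snoc_last, hf1]
  · simp only [Fin.snoc_last, Fin.snoc_castSucc]
    rw [hf0 _ (Submodule.subset_span ⟨j', rfl⟩)]
    simp [(Fin.castSucc_lt_last j').ne']
  · simp only [Fin.snoc_last, Fin.snoc_castSucc]
    rw [hxk i']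
    simp [(Fin.castSucc_lt_last i').ne]
  · simp only [Fin.snoc_castSucc]
    rw [hE i' j']
    simp [Fin.castSucc_inj]

noncomputable def auxTower (hX : ¬ FiniteDimensional ℂ X) :
    (n : ℕ) → {E : Fin n → X × (X →L[ℂ] ℂ) // AuxBiorth E}
  | 0 => ⟨Fin.elim0, fun i => i.elim0⟩
  | n + 1 =>
    ⟨Fin.snoc (auxTower hX n).1 (aux_step hX _ (auxTower hX n).2).choose,
      (aux_step hX _ (auxTower hX n).2).choose_spec⟩

lemma auxTower_castSucc (hX : ¬ FiniteDimensional ℂ X) (n : ℕ) (i : Fin n) :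
    (auxTower hX (n + 1)).1 i.castSucc = (auxTower hX n).1 i := by
  rw [auxTower]
  simp

lemma auxTower_entry (hX : ¬ FiniteDimensional ℂ X) :
    ∀ (N n : ℕ) (h : n < N),
      (auxTower hX N).1 ⟨n, h⟩ = (auxTower hX (n + 1)).1 (Fin.last n) := by
  intro N
  induction N with
  | zero => intro n h; omega
  | succ N ih =>
    intro n h
    rcases eq_or_lt_of_le (Nat.lt_succ_iff.1 h) with heq | hlt
    · subst heq; rfl
    · have : (⟨n, h⟩ : Fin (N + 1)) = (⟨n, hlt⟩ : Fin N).castSucc := rfl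
      rw [this, auxTower_castSucc, ih n hlt]

lemma aux_exists_biorth (hX : ¬ FiniteDimensional ℂ X) :
    ∃ (e : ℕ → X) (f : ℕ → (X →L[ℂ] ℂ)),
      ∀ m n, f m (e n) = if m = n then 1 else 0 := by
  refine ⟨fun n => ((auxTower hX (n + 1)).1 (Fin.last n)).1,
    fun n => ((auxTower hX (n + 1)).1 (Fin.last n)).2, ?_⟩
  intro m n
  set N := max m n + 1 with hN
  have hm : m < N := by omega
  have hn : n < N := by omega
  show ((auxTower hX (m + 1)).1 (Fin.last m)).2 ((auxTower hX (n + 1)).1 (Fin.last n)).1 = _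
  rw [← auxTower_entry hX N m hm, ← auxTower_entry hX N n hn,
    (auxTower hX N).2 ⟨m, hm⟩ ⟨n, hn⟩]
  simp [Fin.mk.injEq]

end Aux


lemma aux_not_finDim {M : Type*} [AddCommGroup M] [Module ℂ M] {v : ℕ → M}
    (hv : LinearIndependent ℂ v) : ¬ FiniteDimensional ℂ M := fun _ =>
  absurd hv.aleph0_le_rank (not_le.2 (Module.rank_lt_aleph0 ℂ M))

/-- Every infinite-dimensional Banach space contains a half-space: a closed
subspace `Y` with both `Y` and `X ⧸ Y` infinite-dimensional. -/
theorem every_infinite_dim_banach_has_half_space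
    (X : Type*) [NormedAddCommGroup X] [NormedSpace ℂ X] [CompleteSpace X]
    (hX : ¬ FiniteDimensional ℂ X) :
    ∃ Y : Submodule ℂ X, IsClosed (Y : Set X) ∧
      ¬ FiniteDimensional ℂ Y ∧ ¬ FiniteDimensional ℂ (X ⧸ Y) := by
  obtain ⟨e, f, hbi⟩ := aux_exists_biorth hX
  set Y : Submodule ℂ X := ⨅ k : ℕ, LinearMap.ker (f (2 * k + 1) : X →ₗ[ℂ] ℂ) with hY
  have hYmem : ∀ x, x ∈ Y ↔ ∀ k, f (2 * k + 1) x = 0 := by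
    intro x
    simp [hY, Submodule.mem_iInf, LinearMap.mem_ker]
  refine ⟨Y, ?_, ?_, ?_⟩
  · have : (Y : Set X) = ⋂ k : ℕ, (LinearMap.ker (f (2 * k + 1) : X →ₗ[ℂ] ℂ) : Set X) := by
      simp [hY, Submodule.coe_iInf]
    rw [this]
    exact isClosed_iInter fun k => ContinuousLinearMap.isClosed_ker (f (2 * k + 1))
  · -- Y is infinite-dimensional
    have hmem : ∀ n, e (2 * n) ∈ Y := by
      intro n
      rw [hYmem]
      intro k
      rw [hbi]
      simp only [ite_eq_right_iff]
      omega
    have hli : LinearIndependent ℂ (fun n : ℕ => (⟨e (2 * n), hmem n⟩ : Y)) := by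
      apply LinearIndependent.of_comp Y.subtype
      rw [linearIndependent_iff']
      intro s g hsum i hi
      have := congrArg (fun y => f (2 * i) y) hsum
      simp only [map_sum, map_smul, smul_eq_mul, map_zero] at this
      rw [Finset.sum_congr rfl (fun j _ => by
        rw [show (f (2 * i)) ((Y.subtype ∘ fun n => (⟨e (2 * n), hmem n⟩ : Y)) j)
            = f (2 * i) (e (2 * j)) from rfl, hbi])] at this
      simp only [mul_ite, mul_one, mul_zero] at this
      rw [Finset.sum_congr rfl (fun j _ => by
        rw [show (if 2 * i = 2 * j then g j else 0) = if i = j then g j else 0 by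
          rcases eq_or_ne i j with h | h
          · simp [h]
          · rw [if_neg h, if_neg (by omega)]])] at this
      rwa [Finset.sum_ite_eq s i g, if_pos hi] at this
    exact aux_not_finDim hli
  · -- X ⧸ Y is infinite-dimensional
    have hle : ∀ k, Y ≤ LinearMap.ker (f (2 * k + 1) : X →ₗ[ℂ] ℂ) := by
      intro k x hx
      exact (hYmem x).1 hx k
    set g : ℕ → (X ⧸ Y) →ₗ[ℂ] ℂ := fun k => Y.liftQ (f (2 * k + 1) : X →ₗ[ℂ] ℂ) (hle k)
      with hg
    have hgval : ∀ k n, g k (Submodule.Quotient.mk (e n)) = f (2 * k + 1) (e n) := by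
      intro k n; rfl
    have hli : LinearIndependent ℂ (fun n : ℕ => (Submodule.Quotient.mk (e (2 * n + 1)) : X ⧸ Y)) := by
      rw [linearIndependent_iff']
      intro s c hsum i hi
      have := congrArg (fun y => g i y) hsum
      simp only [map_sum, map_smul, smul_eq_mul, map_zero] at this
      rw [Finset.sum_congr rfl (fun j _ => by rw [hgval i (2 * j + 1), hbi])] at this
      simp only [mul_ite, mul_one, mul_zero] at this
      rw [Finset.sum_congr rfl (fun j _ => by
        rw [show (if 2 * i + 1 = 2 * j + 1 then c j else 0) = if i = j then c j else 0 by
          rcases eq_or_ne i j with h | h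
          · simp [h]
          · rw [if_neg h, if_neg (by omega)]])] at this
      rwa [Finset.sum_ite_eq s i c, if_pos hi] at this
    exact aux_not_finDim hli
end

section
/- Let (x_n) be a sequence in a Banach space X. Then x_n ∉ closure(span{x_k : k ≠ n}) holds for all n if and only if x_n ∉ closure(span{x_k : k > n}) holds for all n. -/
open Submodule

/-- The sup of a finite-dimensional submodule and a closed submodule is closed. -/
lemma sup_fd_closed {X : Type*} [NormedAddCommGroup X] [NormedSpace ℂ X]
    (W T : Submodule ℂ X) (hT : IsClosed (T : Set X)) [FiniteDimensional ℂ W] :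
    IsClosed ((W ⊔ T : Submodule ℂ X) : Set X) := by
  haveI : IsClosed (T : Set X) := hT
  let π : X →L[ℂ] X ⧸ T :=
    T.mkQ.mkContinuous 1 (fun m => by simpa using Submodule.Quotient.norm_mk_le T m)
  haveI : FiniteDimensional ℂ (W.map T.mkQ) := Module.Finite.map W T.mkQ
  have hclosed : IsClosed ((W.map T.mkQ : Submodule ℂ (X ⧸ T)) : Set (X ⧸ T)) :=
    Submodule.closed_of_finiteDimensional _
  have : ((W ⊔ T : Submodule ℂ X) : Set X) = π ⁻¹' (W.map T.mkQ : Set (X ⧸ T)) := by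
    ext y
    simp only [Set.mem_preimage, SetLike.mem_coe]
    constructor
    · intro hy
      have : y ∈ Submodule.comap T.mkQ (W.map T.mkQ) := by
        rw [Submodule.comap_map_eq, Submodule.ker_mkQ]
        exact hy
      exact this
    · intro hy
      have : y ∈ Submodule.comap T.mkQ (W.map T.mkQ) := hy
      rwa [Submodule.comap_map_eq, Submodule.ker_mkQ] at this
  rw [this]
  exact hclosed.preimage π.continuous

/-- For a sequence `(xₙ)` in a Banach space `X`:
`xₙ ∉ closure (span {x_k : k ≠ n})` for all `n` iff
`xₙ ∉ closure (span {x_k : k > n})` for all `n`. -/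
theorem minimal_sequences_iff
    (X : Type*) [NormedAddCommGroup X] [NormedSpace ℂ X] [CompleteSpace X]
    (x : ℕ → X) :
    (∀ n : ℕ, x n ∉ closure (Submodule.span ℂ (x '' {k | k ≠ n}) : Set X)) ↔
    (∀ n : ℕ, x n ∉ closure (Submodule.span ℂ (x '' {k | n < k}) : Set X)) := by
  constructor
  · intro h n hn
    refine h n (closure_mono ?_ hn)
    exact SetLike.coe_subset_coe.2 <|
      Submodule.span_mono (Set.image_mono fun k hk => ne_of_gt hk)
  · intro h n hn
    -- T is the closed tail span
    set T : Submodule ℂ X := (Submodule.span ℂ (x '' {k | n < k})).topologicalClosure with hTdef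
    have hTc : IsClosed (T : Set X) := Submodule.isClosed_topologicalClosure _
    set W : Submodule ℂ X := Submodule.span ℂ (x '' Set.Ico 0 n) with hWdef
    haveI : FiniteDimensional ℂ W :=
      FiniteDimensional.span_of_finite ℂ ((Set.finite_Ico 0 n).image x)
    have hsub : closure (Submodule.span ℂ (x '' {k | k ≠ n}) : Set X)
        ⊆ ((W ⊔ T : Submodule ℂ X) : Set X) := by
      apply closure_minimal ?_ (sup_fd_closed W T hTc)
      refine SetLike.coe_subset_coe.2 (Submodule.span_le.2 ?_)
      rintro _ ⟨k, hk, rfl⟩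
      rcases lt_or_gt_of_ne (hk : k ≠ n) with hlt | hgt
      · exact Submodule.mem_sup_left
          (Submodule.subset_span ⟨k, by simp [hlt], rfl⟩)
      · exact Submodule.mem_sup_right
          (Submodule.le_topologicalClosure _ (Submodule.subset_span ⟨k, hgt, rfl⟩))
    have hn' : x n ∈ (W ⊔ T : Submodule ℂ X) := hsub hn
    -- the key induction
    have key : ∀ d j : ℕ, n ≤ j + d →
        x n ∈ (Submodule.span ℂ (x '' Set.Ico j n) ⊔ T : Submodule ℂ X) → False := by
      intro d
      induction d with
      | zero =>
          intro j hj hmem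
          have he : Set.Ico j n = (∅ : Set ℕ) := by
            ext m; simp only [Set.mem_Ico, Set.mem_empty_iff_false, iff_false]; omega
          rw [he] at hmem
          simp only [Set.image_empty, Submodule.span_empty, bot_sup_eq] at hmem
          exact h n (by rw [← Submodule.topologicalClosure_coe]; exact hmem)
      | succ d ih =>
          intro j hj hmem
          by_cases hjn : n ≤ j
          · have he : Set.Ico j n = (∅ : Set ℕ) := by
              ext m; simp only [Set.mem_Ico, Set.mem_empty_iff_false, iff_false]; omega
            rw [he] at hmem
            simp only [Set.image_empty, Submodule.span_empty, bot_sup_eq] at hmem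
            exact h n (by rw [← Submodule.topologicalClosure_coe]; exact hmem)
          push_neg at hjn
          have hsplit : Set.Ico j n = insert j (Set.Ico (j + 1) n) := by
            ext m; simp only [Set.mem_Ico, Set.mem_insert_iff]; omega
          rw [hsplit, Set.image_insert_eq, Submodule.span_insert, sup_assoc] at hmem
          obtain ⟨u, hu, w, hw, huw⟩ := Submodule.mem_sup.1 hmem
          obtain ⟨c, rfl⟩ := Submodule.mem_span_singleton.1 hu
          by_cases hc : c = 0
          · apply ih (j + 1) (by omega)
            rw [← huw, hc, zero_smul, zero_add]
            exact hw
          · -- x j lies in the closed span of the strict tail after j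
            set Cj : Submodule ℂ X := (Submodule.span ℂ (x '' {k | j < k})).topologicalClosure
              with hCdef
            have hxn : x n ∈ Cj :=
              Submodule.le_topologicalClosure _ (Submodule.subset_span ⟨n, hjn, rfl⟩)
            have hwC : w ∈ Cj := by
              have hle : (Submodule.span ℂ (x '' Set.Ico (j + 1) n) ⊔ T : Submodule ℂ X)
                  ≤ Cj := by
                apply sup_le
                · exact le_trans (Submodule.span_mono (Set.image_mono fun m hm => by
                    simp only [Set.mem_Ico] at hm; exact Nat.lt_of_succ_le hm.1))
                    (Submodule.le_topologicalClosure _)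
                · exact Submodule.topologicalClosure_mono
                    (Submodule.span_mono (Set.image_mono fun m hm => lt_trans hjn hm))
              exact hle hw
            have hxj : x j ∈ Cj := by
              have : x j = c⁻¹ • (x n - w) := by
                have : c • x j = x n - w := by rw [← huw]; abel
                rw [← this, smul_smul, inv_mul_cancel₀ hc, one_smul]
              rw [this]
              exact Cj.smul_mem _ (Cj.sub_mem hxn hwC)
            exact h j (by rw [← Submodule.topologicalClosure_coe]; exact hxj)
    exact key n 0 (by omega) hn'
end

section
/- Let X and Y be Banach spaces and let T = [[A, X₀],[C, B]] be a bounded operator on X ⊕ Y written in block form (A : X → X, X₀ : Y → X, C : X → Y, B : Y → Y). If rank T = rank C = κ < ∞, then X₀ is uniquely determined by A, C and B; that is, any two such operators T with the same A, B, C and the same rank condition have equal (1,2)-entries. -/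
lemma block_corner_aux {X Y : Type*} [NormedAddCommGroup X] [NormedSpace ℂ X]
    [NormedAddCommGroup Y] [NormedSpace ℂ Y]
    (A : X →L[ℂ] X) (B : Y →L[ℂ] Y) (C : X →L[ℂ] Y) (X₀ : Y →L[ℂ] X)
    (T : (X × Y) →L[ℂ] (X × Y))
    (hT : ∀ p : X × Y, T p = (A p.1 + X₀ p.2, C p.1 + B p.2)) (κ : ℕ)
    (hrT : Module.rank ℂ (LinearMap.range (T : (X × Y) →ₗ[ℂ] (X × Y))) = (κ : Cardinal))
    (hrC : Module.rank ℂ (LinearMap.range (C : X →ₗ[ℂ] Y)) = (κ : Cardinal)) :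
    (∀ y : Y, B y ∈ LinearMap.range (C : X →ₗ[ℂ] Y)) ∧ (∀ (x : X) (y : Y), C x = B y → X₀ y = A x) := by
  classical
  set Tl : (X × Y) →ₗ[ℂ] (X × Y) := (T : (X × Y) →ₗ[ℂ] (X × Y)) with hTl
  set f : (X × Y) →ₗ[ℂ] (X × Y) :=
    (LinearMap.inr ℂ X Y).comp (LinearMap.snd ℂ X Y) with hf
  have hfapp : ∀ p : X × Y, f p = (0, p.2) := fun p => rfl
  set S : (X × Y) →ₗ[ℂ] (X × Y) := f.comp Tl with hSdef
  have hSapp : ∀ p : X × Y, S p = (0, C p.1 + B p.2) := by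
    intro p
    have h1 : Tl p = (A p.1 + X₀ p.2, C p.1 + B p.2) := hT p
    simp only [hSdef, LinearMap.comp_apply, h1, hfapp]
  haveI : Module.Finite ℂ (LinearMap.range (T : (X × Y) →ₗ[ℂ] (X × Y))) := Module.finite_of_rank_eq_nat hrT
  haveI : Module.Finite ℂ (LinearMap.range (C : X →ₗ[ℂ] Y)) := Module.finite_of_rank_eq_nat hrC
  -- the embedded copy of range C inside X × Y
  have hinj : Function.Injective (LinearMap.inr ℂ X Y) := LinearMap.inr_injective
  set Cm : Submodule ℂ (X × Y) := (LinearMap.range (C : X →ₗ[ℂ] Y)).map (LinearMap.inr ℂ X Y) with hCm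
  have hCmrank : Module.rank ℂ Cm = (κ : Cardinal) := by
    have h := (Submodule.equivMapOfInjective (LinearMap.inr ℂ X Y) hinj
      (LinearMap.range (C : X →ₗ[ℂ] Y))).lift_rank_eq
    rw [hrC, Cardinal.lift_natCast] at h
    exact Cardinal.lift_eq_nat_iff.mp h.symm
  haveI : Module.Finite ℂ Cm := Module.finite_of_rank_eq_nat hCmrank
  have hCleS : Cm ≤ LinearMap.range S := by
    rintro _ ⟨_, ⟨x, rfl⟩, rfl⟩
    refine ⟨(x, 0), ?_⟩
    rw [hSapp (x, 0)]
    simp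
  have hTlT : LinearMap.range Tl = LinearMap.range (T : (X × Y) →ₗ[ℂ] (X × Y)) := rfl
  have hSrank : Module.rank ℂ (LinearMap.range S) ≤ (κ : Cardinal) := by
    have h := LinearMap.rank_comp_le_right Tl f
    rw [LinearMap.rank, LinearMap.rank, hTlT, hrT] at h
    exact h
  haveI : Module.Finite ℂ (LinearMap.range S) :=
    Module.rank_lt_aleph0_iff.mp (lt_of_le_of_lt hSrank (Cardinal.nat_lt_aleph0 κ))
  have hfinC : Module.finrank ℂ Cm = κ := Module.finrank_eq_of_rank_eq hCmrank
  have hfinS : Module.finrank ℂ (LinearMap.range S) ≤ κ :=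
    Module.finrank_le_of_rank_le hSrank
  have hSC : Cm = LinearMap.range S :=
    Submodule.eq_of_le_of_finrank_le hCleS (by rw [hfinC]; exact hfinS)
  -- kernel argument
  set L : (LinearMap.range (T : (X × Y) →ₗ[ℂ] (X × Y))) →ₗ[ℂ] (X × Y) := f.comp (LinearMap.range (T : (X × Y) →ₗ[ℂ] (X × Y))).subtype with hL
  have hrangeL : LinearMap.range L = LinearMap.range S := by
    rw [hL, LinearMap.range_comp, Submodule.range_subtype, hSdef, LinearMap.range_comp, hTlT]
  have hfinT : Module.finrank ℂ (LinearMap.range (T : (X × Y) →ₗ[ℂ] (X × Y))) = κ := Module.finrank_eq_of_rank_eq hrT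
  have hrn := LinearMap.finrank_range_add_finrank_ker L
  rw [hrangeL, ← hSC, hfinC, hfinT] at hrn
  have hkerL : LinearMap.ker L = ⊥ := by
    rw [← Submodule.finrank_eq_zero]
    omega
  have hker : ∀ u : X, (u, (0 : Y)) ∈ LinearMap.range (T : (X × Y) →ₗ[ℂ] (X × Y)) → u = 0 := by
    intro u hu
    have hmem : (⟨(u, 0), hu⟩ : LinearMap.range (T : (X × Y) →ₗ[ℂ] (X × Y))) ∈ LinearMap.ker L := by
      simp only [LinearMap.mem_ker, hL, LinearMap.comp_apply, Submodule.coe_subtype, hfapp]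
      simp
    rw [hkerL, Submodule.mem_bot] at hmem
    have := congrArg (fun z : LinearMap.range (T : (X × Y) →ₗ[ℂ] (X × Y)) => (z : X × Y).1) hmem
    simpa using this
  constructor
  · intro y
    have hBy : ((0 : X), B y) ∈ LinearMap.range S := by
      refine ⟨(0, y), ?_⟩
      rw [hSapp (0, y)]
      simp
    rw [← hSC, hCm] at hBy
    obtain ⟨c, hc, hc2⟩ := hBy
    obtain ⟨x, rfl⟩ := hc
    have : C x = B y := congrArg Prod.snd hc2
    exact ⟨x, this⟩
  · intro x y hxy
    have hmem : (X₀ y - A x, (0 : Y)) ∈ LinearMap.range (T : (X × Y) →ₗ[ℂ] (X × Y)) := by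
      refine ⟨(-x, y), ?_⟩
      rw [ContinuousLinearMap.coe_coe, hT (-x, y)]
      simp [hxy, sub_eq_add_neg, add_comm]
    exact sub_eq_zero.mp (hker _ hmem)

/-- If `T = [[A, X₀],[C, B]]` is a block operator on `X ⊕ Y` with
`rank T = rank C = κ < ∞`, then the `(1,2)`-entry `X₀` is uniquely determined
by `A`, `B` and `C`. -/
theorem block_corner_uniquely_determined
    (X Y : Type*) [NormedAddCommGroup X] [NormedSpace ℂ X] [CompleteSpace X]
    [NormedAddCommGroup Y] [NormedSpace ℂ Y] [CompleteSpace Y]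
    (A : X →L[ℂ] X) (B : Y →L[ℂ] Y) (C : X →L[ℂ] Y)
    (X₀ X₀' : Y →L[ℂ] X)
    (T T' : (X × Y) →L[ℂ] (X × Y))
    (hT : ∀ p : X × Y, T p = (A p.1 + X₀ p.2, C p.1 + B p.2))
    (hT' : ∀ p : X × Y, T' p = (A p.1 + X₀' p.2, C p.1 + B p.2))
    (κ : ℕ)
    (hrT : Module.rank ℂ (LinearMap.range (T : (X × Y) →ₗ[ℂ] (X × Y))) = (κ : Cardinal))
    (hrT' : Module.rank ℂ (LinearMap.range (T' : (X × Y) →ₗ[ℂ] (X × Y))) = (κ : Cardinal))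
    (hrC : Module.rank ℂ (LinearMap.range (C : X →ₗ[ℂ] Y)) = (κ : Cardinal)) :
    X₀ = X₀' := by
  obtain ⟨hB, hX⟩ := block_corner_aux A B C X₀ T hT κ hrT hrC
  obtain ⟨-, hX'⟩ := block_corner_aux A B C X₀' T' hT' κ hrT' hrC
  ext y
  obtain ⟨x, hx⟩ := hB y
  rw [hX x y hx, hX' x y hx]
end

section
/- Let X, Y be finite-dimensional spaces and T = [[A, X₀],[C, B]] a linear map on X ⊕ Y in block form. If C : X → Y is invertible and rank T = rank C, then X₀ = A C⁻¹ B. -/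
/-- Finite-dimensional case: if `T = [[A, X₀],[C, B]]` with `C` invertible and
`rank T = rank C`, then `X₀ = A C⁻¹ B`. -/
theorem block_corner_formula
    (X Y : Type*) [AddCommGroup X] [Module ℂ X] [AddCommGroup Y] [Module ℂ Y]
    [FiniteDimensional ℂ X] [FiniteDimensional ℂ Y]
    (A : X →ₗ[ℂ] X) (B : Y →ₗ[ℂ] Y) (C : X ≃ₗ[ℂ] Y) (X₀ : Y →ₗ[ℂ] X)
    (T : (X × Y) →ₗ[ℂ] (X × Y))
    (hT : ∀ p : X × Y, T p = (A p.1 + X₀ p.2, C p.1 + B p.2))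
    (hrank : Module.finrank ℂ (LinearMap.range T) =
      Module.finrank ℂ (LinearMap.range (C : X →ₗ[ℂ] Y))) :
    X₀ = A ∘ₗ (C.symm : Y →ₗ[ℂ] X) ∘ₗ B := by
  ext y
  set S := LinearMap.prod A (C : X →ₗ[ℂ] Y) with hSdef
  have hS : LinearMap.range S ≤ LinearMap.range T := by
    rintro _ ⟨x, rfl⟩
    exact ⟨(x, 0), by simp [hT, hSdef]⟩
  have hinj : Function.Injective S := by
    intro a b h
    have := congrArg Prod.snd h
    exact C.injective this
  have h1 : Module.finrank ℂ (LinearMap.range S) = Module.finrank ℂ X :=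
    LinearMap.finrank_range_of_inj hinj
  have h2 : Module.finrank ℂ (LinearMap.range (C : X →ₗ[ℂ] Y)) = Module.finrank ℂ X :=
    LinearMap.finrank_range_of_inj C.injective
  have heq : LinearMap.range S = LinearMap.range T :=
    Submodule.eq_of_le_of_finrank_le hS (by rw [hrank, h2, h1])
  have hmem : ((X₀ y, B y) : X × Y) ∈ LinearMap.range T := ⟨(0, y), by simp [hT]⟩
  rw [← heq] at hmem
  obtain ⟨x, hx⟩ := hmem
  have hx1 : A x = X₀ y := congrArg Prod.fst hx
  have hx2 : C x = B y := congrArg Prod.snd hx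
  have hxe : x = C.symm (B y) := by rw [← hx2]; simp
  simp [← hx1, hxe]
end

section
/- Let L be a linear subspace of operators of rank at most k on a Hilbert space H, and let A₀ ∈ L be an element of maximal rank κ. If S, T are invertible operators with S A₀ T = [[I_κ, 0],[0, 0]] (block form with respect to an orthogonal decomposition H = H₁ ⊕ H₂, dim H₁ = κ), then for every A ∈ L, writing S A T = [[A₁₁, A₁₂],[A₂₁, A₂₂]] in the same block form, one has A₂₂ = 0. -/
open Polynomial Module Submodule

/-- Key linear-algebra lemma: if `rank (f + t • g) ≤ κ` for all `t : ℂ` and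
`rank f = κ`, then `g` maps the kernel of `f` into the range of `f`. -/
private lemma corner_aux {H : Type*} [NormedAddCommGroup H] [InnerProductSpace ℂ H]
    (f g : H →L[ℂ] H) (κ : ℕ)
    (hf : Module.rank ℂ (LinearMap.range (f : H →ₗ[ℂ] H)) = (κ : Cardinal))
    (h : ∀ t : ℂ, Module.rank ℂ (LinearMap.range (((f + t • g) : H →L[ℂ] H) : H →ₗ[ℂ] H)) ≤ (κ : Cardinal))
    (x : H) (hx : f x = 0) : g x ∈ LinearMap.range (f : H →ₗ[ℂ] H) := by
  classical
  by_contra hgx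
  haveI hfin : Module.Finite ℂ (LinearMap.range (f : H →ₗ[ℂ] H)) := Module.finite_of_rank_eq_nat hf
  have hfr : Module.finrank ℂ (LinearMap.range (f : H →ₗ[ℂ] H)) = κ := Module.finrank_eq_of_rank_eq hf
  let bF : Basis (Fin κ) ℂ (LinearMap.range (f : H →ₗ[ℂ] H)) := Module.finBasisOfFinrankEq ℂ _ hfr
  choose u hu using fun j : Fin κ => LinearMap.mem_range.mp (bF j).2
  -- the independent family `w` and the preimages `u'`
  set w : Fin (κ + 1) → H := Fin.snoc (fun j => (bF j : H)) (g x) with hw_def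
  set u' : Fin (κ + 1) → H := Fin.snoc u x with hu'_def
  have hspan : span ℂ (Set.range fun j => ((bF j : H))) = LinearMap.range (f : H →ₗ[ℂ] H) := by
    rw [show (fun j => ((bF j : H))) = (LinearMap.range (f : H →ₗ[ℂ] H)).subtype ∘ bF from rfl,
      Set.range_comp, ← Submodule.map_span, bF.span_eq, Submodule.map_top,
      Submodule.range_subtype]
  have hw : LinearIndependent ℂ w := by
    rw [hw_def, linearIndependent_fin_snoc]
    refine ⟨bF.linearIndependent.map' (LinearMap.range (f : H →ₗ[ℂ] H)).subtype
      (Submodule.ker_subtype _), ?_⟩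
    rw [hspan]; exact hgx
  -- dual functionals
  obtain ⟨W', hW'⟩ := Submodule.exists_isCompl (span ℂ (Set.range w))
  let π := Submodule.linearProjOfIsCompl _ _ hW'
  let bW : Basis (Fin (κ + 1)) ℂ (span ℂ (Set.range w)) := Basis.span hw
  let φ : Fin (κ + 1) → (H →ₗ[ℂ] ℂ) := fun i => (bW.coord i) ∘ₗ π
  have hφw : ∀ i j, φ i (w j) = if i = j then 1 else 0 := by
    intro i j
    have hmem : w j ∈ span ℂ (Set.range w) := Submodule.subset_span ⟨j, rfl⟩
    have hπ : π (w j) = bW j := by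
      have h1 : π ((⟨w j, hmem⟩ : span ℂ (Set.range w)) : H) = ⟨w j, hmem⟩ :=
        Submodule.linearProjOfIsCompl_apply_left hW' _
      have h2 : bW j = ⟨w j, hmem⟩ := Basis.span_apply hw j
      rw [h2]; exact h1
    simp only [φ, LinearMap.comp_apply, hπ, Basis.coord_apply, Basis.repr_self]
    rw [Finsupp.single_apply]
    simp [eq_comm]
  -- the scalar data
  set ε : Fin (κ + 1) → ℂ := Fin.snoc (fun _ => 1) 0 with hε_def
  have hεlast : ε (Fin.last κ) = 0 := Fin.snoc_last _ _
  have hεcast : ∀ j : Fin κ, ε (Fin.castSucc j) = 1 := fun j => Fin.snoc_castSucc _ _ _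
  have hfu' : ∀ j, f (u' j) = ε j • w j := by
    intro j
    refine Fin.lastCases ?_ (fun j => ?_) j
    · simp [u', w, hεlast, hx]
    · simp [u', w, hεcast, hu j]; exact hu j
  have hgu'last : g (u' (Fin.last κ)) = w (Fin.last κ) := by simp [u', w]
  set c : Matrix (Fin (κ + 1)) (Fin (κ + 1)) ℂ := fun i j => φ i (g (u' j)) with hc_def
  have hclast : ∀ i, c i (Fin.last κ) = if i = Fin.last κ then 1 else 0 := by
    intro i; rw [hc_def]; simp only [hgu'last]; exact hφw i _
  -- pointwise determinant vanishing
  have hdet : ∀ t : ℂ, (Matrix.diagonal ε + t • c).det = 0 := by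
    intro t
    set v : Fin (κ + 1) → H := fun j => (f + t • g) (u' j) with hv_def
    have hvmem : ∀ j, v j ∈ LinearMap.range (((f + t • g) : H →L[ℂ] H) : H →ₗ[ℂ] H) := fun j => ⟨u' j, rfl⟩
    have hnli : ¬ LinearIndependent ℂ v := by
      intro hli
      have hli' : LinearIndependent ℂ
          (fun j => (⟨v j, hvmem j⟩ : LinearMap.range (((f + t • g) : H →L[ℂ] H) : H →ₗ[ℂ] H))) := by
        refine LinearIndependent.of_comp (LinearMap.range (((f + t • g) : H →L[ℂ] H) : H →ₗ[ℂ] H)).subtype ?_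
        exact hli
      have hle := hli'.cardinal_lift_le_rank.trans (Cardinal.lift_le.mpr (h t))
      rw [Cardinal.mk_fin, Cardinal.lift_natCast, Cardinal.lift_natCast,
        Nat.cast_le] at hle
      omega
    obtain ⟨a, ha, i₀, ha₀⟩ := Fintype.not_linearIndependent_iff.mp hnli
    by_contra hdet0
    have hmv : (Matrix.diagonal ε + t • c).mulVec a = 0 := by
      funext i
      have hMij : ∀ j, (Matrix.diagonal ε + t • c) i j = φ i (v j) := by
        intro j
        have : φ i (v j) = ε j • (φ i (w j)) + t * c i j := by
          simp [hv_def, hfu' j, map_smul, hc_def, smul_eq_mul, mul_comm]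
        rw [this, hφw i j]
        by_cases hij : i = j <;>
          simp [Matrix.diagonal_apply, hij, smul_eq_mul]
      calc (Matrix.diagonal ε + t • c).mulVec a i
          = ∑ j, (Matrix.diagonal ε + t • c) i j * a j := by
            simp [Matrix.mulVec, dotProduct]
        _ = ∑ j, a j * φ i (v j) := by
            refine Finset.sum_congr rfl fun j _ => ?_; rw [hMij j, mul_comm]
        _ = φ i (∑ j, a j • v j) := by simp [map_sum, map_smul, smul_eq_mul]
        _ = 0 := by rw [ha, map_zero]
    exact ha₀ (congrFun (Matrix.eq_zero_of_mulVec_eq_zero hdet0 hmv) i₀)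
  -- now the polynomial argument
  set N : Matrix (Fin (κ + 1)) (Fin (κ + 1)) ℂ[X] :=
    fun i j => C (Matrix.diagonal ε i j) + X * C (c i j) with hN_def
  have hNeval : ∀ t : ℂ, N.map (evalRingHom t) = Matrix.diagonal ε + t • c := by
    intro t; ext i j
    rw [Matrix.map_apply, hN_def]
    simp only [Matrix.add_apply, Matrix.smul_apply, smul_eq_mul, map_add, map_mul,
      eval_C, eval_X, eval_mul, eval_add, coe_evalRingHom]
  have hPzero : N.det = 0 := by
    apply Polynomial.funext
    intro t
    rw [eval_zero, ← coe_evalRingHom, RingHom.map_det, RingHom.mapMatrix_apply, hNeval t]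
    exact hdet t
  set e : Fin (κ + 1) → ℂ[X] := fun i => if i = Fin.last κ then 1 else 0 with he_def
  set N₁ : Matrix (Fin (κ + 1)) (Fin (κ + 1)) ℂ[X] :=
    fun i j => if j = Fin.last κ then e i else N i j with hN₁_def
  have hNfac : N = N₁.updateCol (Fin.last κ) ((X : ℂ[X]) • e) := by
    ext i j
    by_cases hj : j = Fin.last κ
    · subst hj
      rw [Matrix.updateCol_self]
      have : Matrix.diagonal ε i (Fin.last κ) = 0 := by
        by_cases hi : i = Fin.last κ
        · subst hi; simp [Matrix.diagonal_apply_eq, hεlast]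
        · simp [Matrix.diagonal_apply_ne _ hi]
      rw [hN_def]
      simp only [this, Pi.smul_apply, smul_eq_mul, he_def, hclast i, map_zero, zero_add]
      by_cases hi : i = Fin.last κ <;> simp [hi]
    · rw [Matrix.updateCol_ne hj, hN₁_def]; simp [hj]
  have hupd : N₁.updateCol (Fin.last κ) e = N₁ := by
    ext i j
    by_cases hj : j = Fin.last κ
    · subst hj; rw [Matrix.updateCol_self, hN₁_def]; simp
    · rw [Matrix.updateCol_ne hj]
  have hdetfac : N.det = X * N₁.det := by
    rw [hNfac, Matrix.det_updateCol_smul, hupd]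
  have hN₁det : N₁.det = 0 := by
    rcases mul_eq_zero.mp (hdetfac ▸ hPzero) with h0 | h0
    · exact absurd h0 Polynomial.X_ne_zero
    · exact h0
  have hN₁map : N₁.map (evalRingHom 0) = 1 := by
    ext i j
    by_cases hj : j = Fin.last κ
    · subst hj
      rw [Matrix.map_apply, hN₁_def]
      simp only [if_pos rfl, he_def]
      by_cases hi : i = Fin.last κ
      · subst hi; simp [Matrix.one_apply]
      · simp [hi, Matrix.one_apply]
    · rw [Matrix.map_apply, hN₁_def]
      simp only [if_neg hj, hN_def]
      have : (evalRingHom 0) (C (Matrix.diagonal ε i j) + X * C (c i j))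
          = Matrix.diagonal ε i j := by simp
      rw [this]
      by_cases hij : i = j
      · subst hij
        have hi' : i ≠ Fin.last κ := hj
        obtain ⟨i', rfl⟩ := Fin.exists_castSucc_eq.mpr hi'
        simp [Matrix.diagonal_apply_eq, hεcast, Matrix.one_apply]
      · simp [Matrix.diagonal_apply_ne _ hij, Matrix.one_apply, hij]
  have h1 : (evalRingHom 0) N₁.det = (N₁.map (evalRingHom 0)).det := by
    rw [RingHom.map_det, RingHom.mapMatrix_apply]
  rw [hN₁det, map_zero, hN₁map, Matrix.det_one] at h1
  exact one_ne_zero h1.symm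

/-- If `A₀ ∈ L` has maximal rank `κ` in the subspace `L` of operators of rank
at most `k`, and `S A₀ T = Q` where `Q` is the orthogonal projection of rank
`κ` (the block `[[I_κ,0],[0,0]]`), then for every `A ∈ L` the `(2,2)`-block of
`S A T`, namely `(1 - Q)(S A T)(1 - Q)`, vanishes. -/
theorem maximal_rank_corner_vanishes
    {H : Type*} [NormedAddCommGroup H] [InnerProductSpace ℂ H] [CompleteSpace H]
    (k κ : ℕ) (L : Submodule ℂ (H →L[ℂ] H))
    (hL : ∀ A ∈ L, Module.rank ℂ (LinearMap.range (A : H →ₗ[ℂ] H)) ≤ (k : Cardinal))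
    (A₀ : H →L[ℂ] H) (hA₀ : A₀ ∈ L)
    (hA₀rank : Module.rank ℂ (LinearMap.range (A₀ : H →ₗ[ℂ] H)) = (κ : Cardinal))
    (hmax : ∀ A ∈ L, Module.rank ℂ (LinearMap.range (A : H →ₗ[ℂ] H)) ≤ (κ : Cardinal))
    (Q : H →L[ℂ] H) (hQ : IsIdempotentElem Q) (hQsa : IsSelfAdjoint Q)
    (hQrank : Module.rank ℂ (LinearMap.range (Q : H →ₗ[ℂ] H)) = (κ : Cardinal))
    (S T : (H →L[ℂ] H)ˣ)
    (hST : (S : H →L[ℂ] H) * A₀ * (T : H →L[ℂ] H) = Q) :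
    ∀ A ∈ L, (1 - Q) * ((S : H →L[ℂ] H) * A * (T : H →L[ℂ] H)) * (1 - Q) = 0 := by
  intro A hA
  set B : H →L[ℂ] H := (S : H →L[ℂ] H) * A * (T : H →L[ℂ] H) with hB_def
  -- rank is invariant under multiplication by the units S, T
  have hrange : ∀ C : H →L[ℂ] H,
      Module.rank ℂ (LinearMap.range ((((S : H →L[ℂ] H) * C * (T : H →L[ℂ] H)) : H →L[ℂ] H) : H →ₗ[ℂ] H))
        = Module.rank ℂ (LinearMap.range (C : H →ₗ[ℂ] H)) := by
    intro C
    let eS : H ≃L[ℂ] H := ContinuousLinearEquiv.ofUnit S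
    have hmap : LinearMap.range ((((S : H →L[ℂ] H) * C * (T : H →L[ℂ] H)) : H →L[ℂ] H) : H →ₗ[ℂ] H)
        = Submodule.map (eS : H →ₗ[ℂ] H) (LinearMap.range (C : H →ₗ[ℂ] H)) := by
      ext y
      simp only [LinearMap.mem_range, Submodule.mem_map]
      constructor
      · rintro ⟨z, rfl⟩
        exact ⟨C ((T : H →L[ℂ] H) z), ⟨_, rfl⟩, rfl⟩
      · rintro ⟨cw, ⟨z, rfl⟩, rfl⟩
        refine ⟨((T⁻¹ : (H →L[ℂ] H)ˣ) : H →L[ℂ] H) z, ?_⟩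
        have hTz : (T : H →L[ℂ] H) (((T⁻¹ : (H →L[ℂ] H)ˣ) : H →L[ℂ] H) z) = z := by
          calc (T : H →L[ℂ] H) (((T⁻¹ : (H →L[ℂ] H)ˣ) : H →L[ℂ] H) z)
              = ((T : H →L[ℂ] H) * ((T⁻¹ : (H →L[ℂ] H)ˣ) : H →L[ℂ] H)) z := rfl
            _ = (1 : H →L[ℂ] H) z := by rw [T.mul_inv]
            _ = z := rfl
        show (S : H →L[ℂ] H) (C ((T : H →L[ℂ] H) _)) = eS (C z)
        rw [hTz]; rfl
    rw [hmap]
    exact LinearEquiv.rank_map_eq (eS : H ≃ₗ[ℂ] H) _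
  have hsum : ∀ t : ℂ, Q + t • B = (S : H →L[ℂ] H) * (A₀ + t • A) * (T : H →L[ℂ] H) := by
    intro t
    rw [← hST, hB_def]
    noncomm_ring
  have hrk : ∀ t : ℂ, Module.rank ℂ (LinearMap.range (((Q + t • B) : H →L[ℂ] H) : H →ₗ[ℂ] H)) ≤ (κ : Cardinal) := by
    intro t
    rw [hsum t, hrange (A₀ + t • A)]
    exact hmax _ (L.add_mem hA₀ (L.smul_mem t hA))
  -- apply the key lemma
  ext x
  have hQQ : ∀ y, Q (Q y) = Q y := fun y => by
    have := congrArg (fun M : H →L[ℂ] H => M y) hQ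
    simpa using this
  have hker : Q ((1 - Q) x) = 0 := by
    simp [ContinuousLinearMap.sub_apply, map_sub, hQQ]
  obtain ⟨z, hz⟩ := corner_aux Q B κ hQrank hrk ((1 - Q) x) hker
  have hQz : Q (B ((1 - Q) x)) = B ((1 - Q) x) := by
    rw [← hz]; exact hQQ z
  have hshow : ((1 - Q) * B * (1 - Q)) x = (1 - Q) (B ((1 - Q) x)) := rfl
  rw [ContinuousLinearMap.zero_apply, hshow, ContinuousLinearMap.sub_apply,
    ContinuousLinearMap.one_apply, hQz, sub_self]
end

section
/- Let H be a Hilbert space with a topologically complemented closed subspace Y, and let E ∈ B(H) be an idempotent with range Y. Then, for T ∈ B(H), there is a finite-dimensional subspace M with T Y ⊆ Y + M if and only if (I − E) T E has finite rank; moreover the minimal dimension of such M equals rank((I − E) T E). -/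
/-- Let `E` be a bounded idempotent with range the closed subspace `Y` of a
Hilbert space `H`. Then `Y` is almost-invariant for `T` (i.e. `T Y ⊆ Y + M`
for some finite-dimensional `M`) iff `(I - E) T E` has finite rank, and in
that case the minimal dimension of such an `M` (the defect) equals
`rank ((I - E) T E)`. -/
theorem almost_invariant_iff_corner_finite_rank
    {H : Type*} [NormedAddCommGroup H] [InnerProductSpace ℂ H] [CompleteSpace H]
    (Y : Submodule ℂ H) (hYc : IsClosed (Y : Set H))
    (E : H →L[ℂ] H) (hE : IsIdempotentElem E)
    (hrange : LinearMap.range (E : H →ₗ[ℂ] H) = Y)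
    (T : H →L[ℂ] H) :
    ((∃ M : Submodule ℂ H, FiniteDimensional ℂ M ∧ ∀ y ∈ Y, T y ∈ Y ⊔ M) ↔
      FiniteDimensional ℂ (LinearMap.range (((1 - E) * T * E : H →L[ℂ] H) : H →ₗ[ℂ] H))) ∧
    (FiniteDimensional ℂ (LinearMap.range (((1 - E) * T * E : H →L[ℂ] H) : H →ₗ[ℂ] H)) →
      IsLeast {n : ℕ | ∃ M : Submodule ℂ H, FiniteDimensional ℂ M ∧
          Module.finrank ℂ M = n ∧ ∀ y ∈ Y, T y ∈ Y ⊔ M}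
        (Module.finrank ℂ (LinearMap.range (((1 - E) * T * E : H →L[ℂ] H) : H →ₗ[ℂ] H)))) := by
  set R : H →L[ℂ] H := (1 - E) * T * E with hR
  have hEfix : ∀ y ∈ Y, E y = y := by
    intro y hy
    rw [← hrange] at hy
    obtain ⟨x, rfl⟩ := hy
    change E (E x) = E x
    conv_lhs => rw [← ContinuousLinearMap.mul_apply, hE]
  -- any admissible M dominates the range of R under (1 - E)
  have hsub : ∀ (M : Submodule ℂ H), (∀ y ∈ Y, T y ∈ Y ⊔ M) →
      LinearMap.range (R : H →ₗ[ℂ] H) ≤ M.map ((1 - E : H →L[ℂ] H) : H →ₗ[ℂ] H) := by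
    intro M hM
    rintro _ ⟨x, rfl⟩
    have hEx : E x ∈ Y := hrange ▸ LinearMap.mem_range_self (E : H →ₗ[ℂ] H) x
    obtain ⟨y, hy, m, hm, hym⟩ := Submodule.mem_sup.mp (hM _ hEx)
    have h1 : (1 - E : H →L[ℂ] H) y = 0 := by
      simp [ContinuousLinearMap.sub_apply, hEfix y hy]
    have hRx : R x = (1 - E : H →L[ℂ] H) m := by
      calc R x = (1 - E : H →L[ℂ] H) (T (E x)) := rfl
        _ = (1 - E : H →L[ℂ] H) (y + m) := by rw [hym]
        _ = (1 - E : H →L[ℂ] H) y + (1 - E : H →L[ℂ] H) m := map_add _ _ _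
        _ = (1 - E : H →L[ℂ] H) m := by rw [h1, zero_add]
    exact hRx ▸ Submodule.mem_map_of_mem hm
  -- the range of R itself is admissible
  have hmem : ∀ y ∈ Y, T y ∈ Y ⊔ LinearMap.range (R : H →ₗ[ℂ] H) := by
    intro y hy
    have hTy : T y = E (T y) + R y := by
      simp only [hR, ContinuousLinearMap.mul_apply, hEfix y hy,
        ContinuousLinearMap.sub_apply, ContinuousLinearMap.one_apply]
      abel
    rw [hTy]
    exact Submodule.add_mem_sup (hrange ▸ LinearMap.mem_range_self (E : H →ₗ[ℂ] H) (T y))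
      (LinearMap.mem_range_self _ _)
  refine ⟨⟨?_, fun h => ⟨LinearMap.range (R : H →ₗ[ℂ] H), h, hmem⟩⟩, fun h => ⟨⟨LinearMap.range (R : H →ₗ[ℂ] H), h, rfl, hmem⟩, ?_⟩⟩
  · rintro ⟨M, hMfd, hM⟩
    haveI := hMfd
    exact Submodule.finiteDimensional_of_le (hsub M hM)
  · rintro n ⟨M, hMfd, rfl, hM⟩
    haveI := hMfd
    calc Module.finrank ℂ (LinearMap.range (R : H →ₗ[ℂ] H))
        ≤ Module.finrank ℂ (M.map ((1 - E : H →L[ℂ] H) : H →ₗ[ℂ] H)) :=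
          Submodule.finrank_mono (hsub M hM)
      _ ≤ Module.finrank ℂ M := Submodule.finrank_map_le _ _
end

section
/- Let T be a bounded operator on a separable Hilbert space H such that T X − X T has finite rank for every X ∈ B(H). Then T = α I + H₀ for some scalar α and finite-rank operator H₀. -/
local notation "⟪" x ", " y "⟫" => @inner ℂ _ _ x y

section Aux
variable {H : Type*} [NormedAddCommGroup H] [InnerProductSpace ℂ H] [CompleteSpace H]

/-- If `T x ∈ M + ℂx` for all `x ∈ Mᗮ`, then a single scalar works. -/
lemma exists_scalar (T : H →L[ℂ] H) (M : Submodule ℂ H)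
    (x₀ : H) (hx₀M : x₀ ∈ Mᗮ) (hx₀ : x₀ ≠ 0)
    (hc : ∀ x ∈ Mᗮ, ∃ c : ℂ, T x - c • x ∈ M) :
    ∃ α : ℂ, ∀ x ∈ Mᗮ, T x - α • x ∈ M := by
  obtain ⟨α, hα⟩ := hc x₀ hx₀M
  refine ⟨α, fun x hx => ?_⟩
  obtain ⟨cx, hcx⟩ := hc x hx
  obtain ⟨cs, hcs⟩ := hc (x + x₀) (add_mem hx hx₀M)
  -- the combination `(cx - cs) • x + (α - cs) • x₀` lies in `M ∩ Mᗮ = ⊥`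
  have hmem : (cx - cs) • x + (α - cs) • x₀ ∈ M := by
    have : (T (x + x₀) - cs • (x + x₀)) - (T x - cx • x) - (T x₀ - α • x₀) ∈ M :=
      sub_mem (sub_mem hcs hcx) hα
    have he : (T (x + x₀) - cs • (x + x₀)) - (T x - cx • x) - (T x₀ - α • x₀)
        = (cx - cs) • x + (α - cs) • x₀ := by
      rw [map_add]; module
    rwa [he] at this
  have hmem' : (cx - cs) • x + (α - cs) • x₀ ∈ Mᗮ :=
    add_mem (Submodule.smul_mem _ _ hx) (Submodule.smul_mem _ _ hx₀M)
  have hzero : (cx - cs) • x + (α - cs) • x₀ = 0 := by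
    have := (Submodule.mem_inf.mpr ⟨hmem, hmem'⟩)
    rwa [Submodule.inf_orthogonal_eq_bot, Submodule.mem_bot] at this
  by_cases hdep : ∃ t : ℂ, x = t • x₀
  · obtain ⟨t, rfl⟩ := hdep
    by_cases ht : t = 0
    · simpa [ht] using M.zero_mem
    · -- combination: ((cx - cs)*t + (α - cs)) • x₀ = 0
      have h1 : ((cx - cs) * t + (α - cs)) • x₀ = 0 := by
        rw [← hzero]; module
      have h2 : (cx - cs) * t + (α - cs) = 0 := by
        by_contra hne
        exact hx₀ (by simpa [hne] using (smul_eq_zero.mp h1))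
      -- T (t • x₀) - α • (t • x₀) = t • (T x₀ - α • x₀)
      have : T (t • x₀) - α • (t • x₀) = t • (T x₀ - α • x₀) := by
        rw [map_smul]; module
      rw [this]
      exact Submodule.smul_mem _ _ hα
  · -- x is not a multiple of x₀; deduce cs = α and then cx = cs
    have hxne : x ≠ 0 := by rintro rfl; exact hdep ⟨0, by simp⟩
    have hcsα : α = cs := by
      by_contra hne
      by_cases hcc : cx = cs
      · have h1 : (α - cs) • x₀ = 0 := by
          rw [hcc] at hzero; simpa using hzero
        rcases smul_eq_zero.mp h1 with h | h
        · exact hne (by linear_combination h)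
        · exact hx₀ h
      · refine hdep ⟨-(cx - cs)⁻¹ * (α - cs), ?_⟩
        have h2 : (cx - cs) • x = -((α - cs) • x₀) := by
          rw [eq_neg_iff_add_eq_zero]; exact hzero
        have h3 : x = (cx - cs)⁻¹ • ((cx - cs) • x) := by
          rw [smul_smul, inv_mul_cancel₀ (sub_ne_zero.mpr hcc), one_smul]
        rw [h3, h2]
        rw [smul_neg, smul_smul]
        module
    have hcxcs : cx = cs := by
      have h1 : (cx - cs) • x = 0 := by
        rw [hcsα] at hzero; simpa using hzero
      have := smul_eq_zero.mp h1
      rcases this with h | h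
      · linear_combination h
      · exact absurd h hxne
    have : α = cx := by rw [hcsα, ← hcxcs]
    rwa [this]

lemma key_step (T : H →L[ℂ] H) (hinf : ¬ FiniteDimensional ℂ H)
    (hNF : ∀ α : ℂ, ¬ FiniteDimensional ℂ (LinearMap.range ((T - α • (1 : H →L[ℂ] H) : H →L[ℂ] H) : H →ₗ[ℂ] H)))
    (M : Submodule ℂ H) (hM : FiniteDimensional ℂ M) :
    ∃ x y : H, ‖x‖ = 1 ∧ ‖y‖ = 1 ∧ x ∈ Mᗮ ∧ y ∈ Mᗮ ∧ ⟪x, y⟫ = 0 ∧ ⟪y, T x⟫ ≠ 0 := by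
  -- first: there is a unit vector x ∈ Mᗮ with T x ∉ M ⊔ ℂ x
  have claim : ∃ x : H, ‖x‖ = 1 ∧ x ∈ Mᗮ ∧ T x ∉ M ⊔ Submodule.span ℂ {x} := by
    by_contra hcon
    push_neg at hcon
    -- all of Mᗮ satisfies T x ∈ M + ℂ x
    have hc : ∀ x ∈ Mᗮ, ∃ c : ℂ, T x - c • x ∈ M := by
      intro x hx
      rcases eq_or_ne x 0 with rfl | hxne
      · exact ⟨0, by simpa using M.zero_mem⟩
      · set u : H := (‖x‖⁻¹ : ℂ) • x with hu
        have hun : ‖u‖ = 1 := by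
          rw [hu, norm_smul]
          simp [norm_ne_zero_iff.mpr hxne]
        have huM : u ∈ Mᗮ := Submodule.smul_mem _ _ hx
        have h1 : T u ∈ M ⊔ Submodule.span ℂ {u} := hcon u hun huM
        have hsp : Submodule.span ℂ {u} ≤ Submodule.span ℂ {x} := by
          rw [Submodule.span_singleton_le_iff_mem, hu]
          exact Submodule.smul_mem _ _ (Submodule.mem_span_singleton_self x)
        have h2 : T x ∈ M ⊔ Submodule.span ℂ {x} := by
          have hx2 : x = (‖x‖ : ℂ) • u := by
            rw [hu, smul_smul, mul_inv_cancel₀ (by exact_mod_cast norm_ne_zero_iff.mpr hxne), one_smul]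
          have h3 : T x = (‖x‖ : ℂ) • T u := by
            conv_lhs => rw [hx2]
            rw [map_smul]
          rw [h3]
          refine Submodule.smul_mem _ _ (Submodule.mem_sup.mpr ?_)
          obtain ⟨m, hm, s, hs, hms⟩ := Submodule.mem_sup.mp h1
          exact ⟨m, hm, s, hsp hs, hms⟩
        obtain ⟨m, hm, s, hs, hms⟩ := Submodule.mem_sup.mp h2
        obtain ⟨c, rfl⟩ := Submodule.mem_span_singleton.mp hs
        exact ⟨c, by rw [← hms]; simpa using hm⟩
    -- Mᗮ ≠ ⊥ since H is infinite dimensional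
    have hbot : Mᗮ ≠ ⊥ := by
      intro hb
      have : M = ⊤ := Submodule.orthogonal_eq_bot_iff.mp hb
      exact hinf (by rw [this] at hM; exact Module.Finite.equiv (Submodule.topEquiv))
    obtain ⟨x₀, hx₀M, hx₀⟩ := Submodule.exists_mem_ne_zero_of_ne_bot hbot
    obtain ⟨α, hα⟩ := exists_scalar T M x₀ hx₀M hx₀ hc
    apply hNF α
    -- range (T - α•1) is contained in M ⊔ (T - α•1) '' M
    set S : H →L[ℂ] H := T - α • (1 : H →L[ℂ] H) with hS
    have hSx : ∀ v : H, S v = T v - α • v := by intro v; simp [hS]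
    have hle : LinearMap.range (S : H →ₗ[ℂ] H) ≤ M ⊔ Submodule.map (S : H →ₗ[ℂ] H) M := by
      rintro - ⟨u, rfl⟩
      obtain ⟨y, hy, z, hz, rfl⟩ := M.exists_add_mem_mem_orthogonal u
      have h1 : S y ∈ Submodule.map (S : H →ₗ[ℂ] H) M := ⟨y, hy, rfl⟩
      have h2 : S z ∈ M := by rw [hSx]; exact hα z hz
      rw [map_add]
      exact Submodule.add_mem _ (Submodule.mem_sup_right h1) (Submodule.mem_sup_left h2)
    exact Submodule.finiteDimensional_of_le hle
  -- construct y from x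
  obtain ⟨x, hxn, hxM, hTx⟩ := claim
  set N : Submodule ℂ H := M ⊔ Submodule.span ℂ {x} with hN
  haveI : FiniteDimensional ℂ N := by
    apply Submodule.finiteDimensional_sup
  set w : H := T x - (Submodule.orthogonalProjectionOnto N (T x) : H) with hw
  have hwN : w ∈ Nᗮ := Submodule.sub_starProjection_mem_orthogonal (K := N) (T x)
  have hwne : w ≠ 0 := by
    intro h0
    apply hTx
    have h1 : T x = (Submodule.orthogonalProjectionOnto N (T x) : H) := by
      have := sub_eq_zero.mp (hw ▸ h0)
      exact this
    rw [h1]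
    exact (Submodule.orthogonalProjectionOnto N (T x)).2
  set y : H := (‖w‖⁻¹ : ℂ) • w with hy
  have hyn : ‖y‖ = 1 := by
    rw [hy, norm_smul]
    simp [norm_ne_zero_iff.mpr hwne]
  have hyN : y ∈ Nᗮ := Submodule.smul_mem _ _ hwN
  have hyM : y ∈ Mᗮ := Submodule.orthogonal_le le_sup_left hyN
  have hxy : ⟪x, y⟫ = 0 := by
    apply (Submodule.mem_orthogonal N y).mp hyN
    exact Submodule.mem_sup_right (Submodule.mem_span_singleton_self x)
  have hyTx : ⟪y, T x⟫ ≠ 0 := by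
    have hdec : T x = w + (Submodule.orthogonalProjectionOnto N (T x) : H) := by rw [hw]; abel
    have h2 : ⟪y, (Submodule.orthogonalProjectionOnto N (T x) : H)⟫ = 0 :=
      (Submodule.mem_orthogonal' N y).mp hyN _ (Submodule.orthogonalProjectionOnto N (T x)).2
    have h3 : ⟪y, T x⟫ = ⟪y, w⟫ := by
      rw [hdec, inner_add_right, h2, add_zero]
    rw [h3, hy, inner_smul_left]
    simp only [map_inv₀, Complex.conj_ofReal]
    rw [inner_self_eq_norm_sq_to_K]
    have : (‖w‖ : ℂ) ≠ 0 := by exact_mod_cast norm_ne_zero_iff.mpr hwne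
    field_simp
    exact div_ne_zero (pow_ne_zero 2 this) this
  exact ⟨x, y, hxn, hyn, hxM, hyM, hxy, hyTx⟩

/-- The span of all previous data. -/
noncomputable def Mof (T : H →L[ℂ] H) (g : ℕ → H × H) (n : ℕ) : Submodule ℂ H :=
  Submodule.span ℂ (⋃ k ∈ Set.Iio n,
    ({(g k).1, (g k).2, (ContinuousLinearMap.adjoint T) (g k).2} : Set H))

lemma Mof_fd (T : H →L[ℂ] H) (g : ℕ → H × H) (n : ℕ) : FiniteDimensional ℂ (Mof T g n) := by
  apply FiniteDimensional.span_of_finite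
  apply Set.Finite.biUnion (Set.finite_Iio n)
  intro k _
  exact ((Set.finite_singleton _).insert _).insert _

lemma Mof_congr (T : H →L[ℂ] H) {g g' : ℕ → H × H} (n : ℕ)
    (hgg : ∀ k, k < n → g k = g' k) : Mof T g n = Mof T g' n := by
  unfold Mof
  congr 1
  apply Set.iUnion₂_congr
  intro k hk
  rw [hgg k hk]

lemma mem_Mof_left (T : H →L[ℂ] H) (g : ℕ → H × H) {k n : ℕ} (hk : k < n) :
    (g k).1 ∈ Mof T g n :=
  Submodule.subset_span (Set.mem_biUnion hk (by simp))

lemma mem_Mof_right (T : H →L[ℂ] H) (g : ℕ → H × H) {k n : ℕ} (hk : k < n) :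
    (g k).2 ∈ Mof T g n :=
  Submodule.subset_span (Set.mem_biUnion hk (by simp))

lemma mem_Mof_adj (T : H →L[ℂ] H) (g : ℕ → H × H) {k n : ℕ} (hk : k < n) :
    (ContinuousLinearMap.adjoint T) (g k).2 ∈ Mof T g n :=
  Submodule.subset_span (Set.mem_biUnion hk (by simp))

noncomputable def nextPair (T : H →L[ℂ] H) (hinf : ¬ FiniteDimensional ℂ H)
    (hNF : ∀ α : ℂ, ¬ FiniteDimensional ℂ (LinearMap.range ((T - α • (1 : H →L[ℂ] H) : H →L[ℂ] H) : H →ₗ[ℂ] H)))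
    (g : ℕ → H × H) (n : ℕ) : H × H :=
  ⟨(key_step T hinf hNF (Mof T g n) (Mof_fd T g n)).choose,
   (key_step T hinf hNF (Mof T g n) (Mof_fd T g n)).choose_spec.choose⟩

lemma nextPair_spec (T : H →L[ℂ] H) (hinf : ¬ FiniteDimensional ℂ H)
    (hNF : ∀ α : ℂ, ¬ FiniteDimensional ℂ (LinearMap.range ((T - α • (1 : H →L[ℂ] H) : H →L[ℂ] H) : H →ₗ[ℂ] H)))
    (g : ℕ → H × H) (n : ℕ) :
    ‖(nextPair T hinf hNF g n).1‖ = 1 ∧ ‖(nextPair T hinf hNF g n).2‖ = 1 ∧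
    (nextPair T hinf hNF g n).1 ∈ (Mof T g n)ᗮ ∧ (nextPair T hinf hNF g n).2 ∈ (Mof T g n)ᗮ ∧
    ⟪(nextPair T hinf hNF g n).1, (nextPair T hinf hNF g n).2⟫ = 0 ∧
    ⟪(nextPair T hinf hNF g n).2, T (nextPair T hinf hNF g n).1⟫ ≠ 0 :=
  (key_step T hinf hNF (Mof T g n) (Mof_fd T g n)).choose_spec.choose_spec

noncomputable def hist (T : H →L[ℂ] H) (hinf : ¬ FiniteDimensional ℂ H)
    (hNF : ∀ α : ℂ, ¬ FiniteDimensional ℂ (LinearMap.range ((T - α • (1 : H →L[ℂ] H) : H →L[ℂ] H) : H →ₗ[ℂ] H))) :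
    ℕ → ℕ → H × H
  | 0 => fun _ => (0, 0)
  | n + 1 => fun k =>
      if k = n then nextPair T hinf hNF (hist T hinf hNF n) n else hist T hinf hNF n k

noncomputable def seq (T : H →L[ℂ] H) (hinf : ¬ FiniteDimensional ℂ H)
    (hNF : ∀ α : ℂ, ¬ FiniteDimensional ℂ (LinearMap.range ((T - α • (1 : H →L[ℂ] H) : H →L[ℂ] H) : H →ₗ[ℂ] H)))
    (n : ℕ) : H × H :=
  hist T hinf hNF (n + 1) n

lemma hist_eq_seq (T : H →L[ℂ] H) (hinf : ¬ FiniteDimensional ℂ H)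
    (hNF : ∀ α : ℂ, ¬ FiniteDimensional ℂ (LinearMap.range ((T - α • (1 : H →L[ℂ] H) : H →L[ℂ] H) : H →ₗ[ℂ] H))) :
    ∀ m k, k < m → hist T hinf hNF m k = seq T hinf hNF k := by
  intro m
  induction m with
  | zero => intro k hk; omega
  | succ n ih =>
    intro k hk
    rcases Nat.lt_succ_iff_lt_or_eq.mp hk with h | rfl
    · have : hist T hinf hNF (n + 1) k = hist T hinf hNF n k := by
        simp [hist, Nat.ne_of_lt h]
      rw [this, ih k h]
    · rfl

lemma seq_spec (T : H →L[ℂ] H) (hinf : ¬ FiniteDimensional ℂ H)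
    (hNF : ∀ α : ℂ, ¬ FiniteDimensional ℂ (LinearMap.range ((T - α • (1 : H →L[ℂ] H) : H →L[ℂ] H) : H →ₗ[ℂ] H))) (n : ℕ) :
    ‖(seq T hinf hNF n).1‖ = 1 ∧ ‖(seq T hinf hNF n).2‖ = 1 ∧
    (seq T hinf hNF n).1 ∈ (Mof T (seq T hinf hNF) n)ᗮ ∧
    (seq T hinf hNF n).2 ∈ (Mof T (seq T hinf hNF) n)ᗮ ∧
    ⟪(seq T hinf hNF n).1, (seq T hinf hNF n).2⟫ = 0 ∧
    ⟪(seq T hinf hNF n).2, T (seq T hinf hNF n).1⟫ ≠ 0 := by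
  have hM : Mof T (hist T hinf hNF n) n = Mof T (seq T hinf hNF) n :=
    Mof_congr T n (fun k hk => hist_eq_seq T hinf hNF n k hk)
  have hseq : seq T hinf hNF n = nextPair T hinf hNF (hist T hinf hNF n) n := by
    show hist T hinf hNF (n + 1) n = _
    simp [hist]
  rw [hseq, ← hM]
  exact nextPair_spec T hinf hNF (hist T hinf hNF n) n

lemma seq_props (T : H →L[ℂ] H) (hinf : ¬ FiniteDimensional ℂ H)
    (hNF : ∀ α : ℂ, ¬ FiniteDimensional ℂ (LinearMap.range ((T - α • (1 : H →L[ℂ] H) : H →L[ℂ] H) : H →ₗ[ℂ] H))) :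
    ∃ x y : ℕ → H, Orthonormal ℂ x ∧ Orthonormal ℂ y ∧ (∀ k n, ⟪y k, x n⟫ = 0) ∧
      (∀ k n, k < n → ⟪y k, T (x n)⟫ = 0) ∧ (∀ n, ⟪y n, T (x n)⟫ ≠ 0) := by
  set g := seq T hinf hNF with hg
  set x : ℕ → H := fun n => (g n).1 with hx
  set y : ℕ → H := fun n => (g n).2 with hy
  have spec := fun n => seq_spec T hinf hNF n
  -- orthogonality to earlier generators
  have horthx : ∀ {k n : ℕ}, k < n → ⟪x k, x n⟫ = 0 ∧ ⟪y k, x n⟫ = 0 ∧ ⟪y k, T (x n)⟫ = 0 := by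
    intro k n hk
    have hmem := (spec n).2.2.1
    refine ⟨(Submodule.mem_orthogonal _ _).mp hmem _ (mem_Mof_left T g hk),
      (Submodule.mem_orthogonal _ _).mp hmem _ (mem_Mof_right T g hk), ?_⟩
    have := (Submodule.mem_orthogonal _ _).mp hmem _ (mem_Mof_adj T g hk)
    rwa [ContinuousLinearMap.adjoint_inner_left] at this
  have horthy : ∀ {k n : ℕ}, k < n → ⟪x k, y n⟫ = 0 ∧ ⟪y k, y n⟫ = 0 := by
    intro k n hk
    have hmem := (spec n).2.2.2.1
    exact ⟨(Submodule.mem_orthogonal _ _).mp hmem _ (mem_Mof_left T g hk),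
      (Submodule.mem_orthogonal _ _).mp hmem _ (mem_Mof_right T g hk)⟩
  refine ⟨x, y, ?_, ?_, ?_, fun k n hk => (horthx hk).2.2, fun n => (spec n).2.2.2.2.2⟩
  · rw [orthonormal_iff_ite]
    intro i j
    rcases lt_trichotomy i j with hij | rfl | hij
    · rw [if_neg (Nat.ne_of_lt hij)]; exact (horthx hij).1
    · rw [if_pos rfl, @inner_self_eq_norm_sq_to_K ℂ, (spec i).1]; norm_num
    · rw [if_neg (Nat.ne_of_lt' hij), ← inner_conj_symm, (horthx hij).1, map_zero]
  · rw [orthonormal_iff_ite]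
    intro i j
    rcases lt_trichotomy i j with hij | rfl | hij
    · rw [if_neg (Nat.ne_of_lt hij)]; exact (horthy hij).2
    · rw [if_pos rfl, @inner_self_eq_norm_sq_to_K ℂ, (spec i).2.1]; norm_num
    · rw [if_neg (Nat.ne_of_lt' hij), ← inner_conj_symm, (horthy hij).2, map_zero]
  · intro k n
    rcases lt_trichotomy k n with hkn | rfl | hkn
    · exact (horthx hkn).2.1
    · rw [← inner_conj_symm, (spec k).2.2.2.2.1, map_zero]
    · rw [← inner_conj_symm, (horthy hkn).1, map_zero]

lemma main_contra (T : H →L[ℂ] H) (x y : ℕ → H)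
    (hx : Orthonormal ℂ x) (hy : Orthonormal ℂ y)
    (hyx : ∀ k n, ⟪y k, x n⟫ = 0)
    (htri : ∀ k n, k < n → ⟪y k, T (x n)⟫ = 0)
    (hdiag : ∀ n, ⟪y n, T (x n)⟫ ≠ 0)
    (h : ∀ X : H →L[ℂ] H, FiniteDimensional ℂ (LinearMap.range ((T * X - X * T : H →L[ℂ] H) : H →ₗ[ℂ] H))) : False := by
  classical
  set Ix := hx.orthogonalFamily.linearIsometry with hIx
  set Iy := hy.orthogonalFamily.linearIsometry with hIy
  set X : H →L[ℂ] H :=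
    Ix.toContinuousLinearMap.comp (ContinuousLinearMap.adjoint Iy.toContinuousLinearMap) with hX
  have hIx_single : ∀ n : ℕ, Ix (lp.single 2 n (1 : ℂ)) = x n := by
    intro n
    rw [hIx, hx.orthogonalFamily.linearIsometry_apply_single]
    simp [LinearIsometry.toSpanSingleton]
  have hIy_single : ∀ n : ℕ, Iy (lp.single 2 n (1 : ℂ)) = y n := by
    intro n
    rw [hIy, hy.orthogonalFamily.linearIsometry_apply_single]
    simp [LinearIsometry.toSpanSingleton]
  have hadj : ∀ k : ℕ, ContinuousLinearMap.adjoint Iy.toContinuousLinearMap (y k)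
      = lp.single 2 k (1 : ℂ) := by
    intro k
    apply lp.ext
    funext n
    have h1 : (ContinuousLinearMap.adjoint Iy.toContinuousLinearMap (y k)) n
        = ⟪lp.single 2 n (1 : ℂ), ContinuousLinearMap.adjoint Iy.toContinuousLinearMap (y k)⟫ := by
      rw [lp.inner_single_left]
      simp
    rw [h1, ContinuousLinearMap.adjoint_inner_right]
    have h2 : Iy.toContinuousLinearMap (lp.single 2 n (1 : ℂ)) = y n := hIy_single n
    rw [h2]
    rw [lp.single_apply]
    rcases eq_or_ne n k with rfl | hne
    · simp [inner_self_eq_norm_sq_to_K, hy.1 n]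
    · simp [hne, hy.2 hne]
  have hXy : ∀ k : ℕ, X (y k) = x k := by
    intro k
    rw [hX]
    simp only [ContinuousLinearMap.comp_apply]
    rw [hadj k]
    exact hIx_single k
  have hXo : ∀ (w : H) (k : ℕ), ⟪y k, X w⟫ = 0 := by
    intro w k
    have hsum := hx.orthogonalFamily.hasSum_linearIsometry
      (ContinuousLinearMap.adjoint Iy.toContinuousLinearMap w)
    have hXw : X w = Ix (ContinuousLinearMap.adjoint Iy.toContinuousLinearMap w) := rfl
    have h2 := (innerSL ℂ (y k)).hasSum hsum
    have h3 : (fun n => (innerSL ℂ (y k))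
        ((LinearIsometry.toSpanSingleton ℂ H (hx.1 n))
          ((ContinuousLinearMap.adjoint Iy.toContinuousLinearMap w) n))) = fun _ => (0 : ℂ) := by
      funext n
      simp [LinearIsometry.toSpanSingleton, inner_smul_right, hyx k n]
    rw [h3] at h2
    rw [hXw]
    have h4 := h2.unique hasSum_zero
    simpa using h4
  -- the commutator applied to y n
  set v : ℕ → H := fun n => (T * X - X * T) (y n) with hv
  have hvy : ∀ k n : ℕ, ⟪y k, v n⟫ = ⟪y k, T (x n)⟫ := by
    intro k n
    rw [hv]
    simp only [ContinuousLinearMap.sub_apply, ContinuousLinearMap.mul_apply]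
    rw [inner_sub_right, hXy n, hXo (T (y n)) k, sub_zero]
  -- linear independence
  have hli : LinearIndependent ℂ v := by
    rw [linearIndependent_iff']
    intro s
    induction s using Finset.strongInduction with
    | _ s ih =>
      intro g hsum i his
      have hne : s.Nonempty := ⟨i, his⟩
      set k := s.min' hne with hk
      have hks : k ∈ s := s.min'_mem hne
      have hgk : g k = 0 := by
        have h0 : ⟪y k, ∑ j ∈ s, g j • v j⟫ = 0 := by rw [hsum, inner_zero_right]
        rw [inner_sum] at h0
        have h1 : ∀ j ∈ s, j ≠ k → ⟪y k, g j • v j⟫ = 0 := by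
          intro j hjs hjk
          have hkj : k < j := lt_of_le_of_ne (s.min'_le j hjs) (Ne.symm hjk)
          rw [inner_smul_right, hvy, htri k j hkj, mul_zero]
        rw [Finset.sum_eq_single k h1 (fun hks' => absurd hks hks')] at h0
        rw [inner_smul_right, hvy, mul_eq_zero] at h0
        exact h0.resolve_right (hdiag k)
      rcases eq_or_ne i k with rfl | hik
      · exact hgk
      · have hsum' : ∑ j ∈ s.erase k, g j • v j = 0 := by
          rw [← Finset.sum_erase_add s _ hks] at hsum
          rw [hgk, zero_smul, add_zero] at hsum
          exact hsum
        exact ih (s.erase k) (Finset.erase_ssubset hks) g hsum' i (Finset.mem_erase.mpr ⟨hik, his⟩)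
  -- contradiction with finite rank
  haveI := h X
  set R := LinearMap.range ((T * X - X * T : H →L[ℂ] H) : H →ₗ[ℂ] H) with hR
  have hmem : ∀ n, v n ∈ R := fun n => LinearMap.mem_range_self _ _
  set v' : ℕ → R := fun n => ⟨v n, hmem n⟩ with hv'
  have hli' : LinearIndependent ℂ v' := by
    apply LinearIndependent.of_comp R.subtype
    exact hli
  exact Module.Finite.not_linearIndependent_of_infinite v' hli'

end Aux

/-- If `T` is a bounded operator on a separable Hilbert space such that
`T X - X T` has finite rank for every bounded `X`, then `T = α I + H₀` for
some scalar `α` and finite-rank operator `H₀`. -/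
theorem finite_rank_commutators_scalar_plus_finite_rank
    {H : Type*} [NormedAddCommGroup H] [InnerProductSpace ℂ H] [CompleteSpace H]
    [TopologicalSpace.SeparableSpace H]
    (T : H →L[ℂ] H)
    (h : ∀ X : H →L[ℂ] H, FiniteDimensional ℂ (LinearMap.range ((T * X - X * T : H →L[ℂ] H) : H →ₗ[ℂ] H))) :
    ∃ (α : ℂ) (H₀ : H →L[ℂ] H),
      FiniteDimensional ℂ (LinearMap.range (H₀ : H →ₗ[ℂ] H)) ∧ T = α • (1 : H →L[ℂ] H) + H₀ := by
  by_cases hfd : FiniteDimensional ℂ H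
  · exact ⟨0, T, inferInstance, by simp⟩
  · by_contra hcon
    push_neg at hcon
    have hNF : ∀ α : ℂ, ¬ FiniteDimensional ℂ (LinearMap.range ((T - α • (1 : H →L[ℂ] H) : H →L[ℂ] H) : H →ₗ[ℂ] H)) := by
      intro α hfin
      exact hcon α (T - α • (1 : H →L[ℂ] H)) hfin (by module)
    obtain ⟨x, y, h1, h2, h3, h4, h5⟩ := seq_props T hfd hNF
    exact main_contra T x y h1 h2 h3 h4 h5 h
end

section
/- Let A and B be bounded operators on Hilbert spaces H and K respectively with σ(A) ∩ σ(B) = ∅. Then the only bounded operator X : H → K (equivalently X ∈ B(H,K)) satisfying B X = X A is X = 0. -/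
open ContinuousLinearMap Filter Bornology spectrum

/-- If `A ∈ B(H)` and `B ∈ B(K)` have disjoint spectra, then the only bounded
`X : H → K` with `B X = X A` is `X = 0`. -/
theorem rosenblum_disjoint_spectra_injective
    {H K : Type*} [NormedAddCommGroup H] [InnerProductSpace ℂ H] [CompleteSpace H]
    [NormedAddCommGroup K] [InnerProductSpace ℂ K] [CompleteSpace K]
    (A : H →L[ℂ] H) (B : K →L[ℂ] K)
    (hspec : spectrum ℂ A ∩ spectrum ℂ B = ∅)
    (X : H →L[ℂ] K) (hX : B.comp X = X.comp A) :
    X = 0 := by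
  classical
  -- the basic intertwining identity
  have hint : ∀ z : ℂ, (algebraMap ℂ (K →L[ℂ] K) z - B).comp X
      = X.comp (algebraMap ℂ (H →L[ℂ] H) z - A) := by
    intro z
    simp [sub_comp, comp_sub, hX, Algebra.algebraMap_eq_smul_one, smul_comp, comp_smul,
      one_def]
  -- the resolvents intertwine on the common resolvent set
  have hres : ∀ z : ℂ, z ∈ resolventSet ℂ A → z ∈ resolventSet ℂ B →
      (resolvent B z).comp X = X.comp (resolvent A z) := by
    intro z hA hB
    have hA' : IsUnit (algebraMap ℂ (H →L[ℂ] H) z - A) := hA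
    have hB' : IsUnit (algebraMap ℂ (K →L[ℂ] K) z - B) := hB
    have h1 : (resolvent B z).comp ((algebraMap ℂ (K →L[ℂ] K) z - B).comp
        (X.comp (resolvent A z))) = X.comp (resolvent A z) := by
      rw [← comp_assoc]
      have : (resolvent B z).comp (algebraMap ℂ (K →L[ℂ] K) z - B) = 1 := by
        rw [← ContinuousLinearMap.mul_def, resolvent]
        exact Ring.inverse_mul_cancel _ hB'
      rw [this, one_def, id_comp]
    have h2 : (algebraMap ℂ (K →L[ℂ] K) z - B).comp (X.comp (resolvent A z)) = X := by
      rw [← comp_assoc, hint z, comp_assoc]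
      have : (algebraMap ℂ (H →L[ℂ] H) z - A).comp (resolvent A z) = 1 := by
        rw [← ContinuousLinearMap.mul_def, resolvent]
        exact Ring.mul_inverse_cancel _ hA'
      rw [this, one_def, comp_id]
    rw [← h1, h2]
  -- the entire function
  set F : ℂ → (H →L[ℂ] K) := fun z =>
    if z ∈ spectrum ℂ A then (resolvent B z).comp X else X.comp (resolvent A z) with hF
  have hFA : ∀ z ∈ resolventSet ℂ A, F z = X.comp (resolvent A z) := by
    intro z hz
    simp only [hF, if_neg (show z ∉ spectrum ℂ A from fun h => h hz)]
  have hFB : ∀ z ∈ resolventSet ℂ B, F z = (resolvent B z).comp X := by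
    intro z hz
    by_cases h : z ∈ spectrum ℂ A
    · simp only [hF, if_pos h]
    · simp only [hF, if_neg h]
      exact (hres z (not_not.mp h) hz).symm
  -- F is differentiable everywhere
  have hdiff : Differentiable ℂ F := by
    intro z
    by_cases h : z ∈ spectrum ℂ A
    · -- then z ∉ spectrum B
      have hzB : z ∈ resolventSet ℂ B := by
        by_contra h'
        exact absurd (Set.mem_inter h (show z ∈ spectrum ℂ B from h')) (hspec ▸ Set.notMem_empty z)
      have hd : DifferentiableAt ℂ (fun w => (resolvent B w).comp X) z :=
        ((hasDerivAt_resolvent hzB).differentiableAt).clm_comp (differentiableAt_const X)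
      refine hd.congr_of_eventuallyEq ?_
      filter_upwards [(spectrum.isOpen_resolventSet B).mem_nhds hzB] with w hw
      exact hFB w hw
    · have hd : DifferentiableAt ℂ (fun w => X.comp (resolvent A w)) z :=
        (differentiableAt_const X).clm_comp ((hasDerivAt_resolvent (not_not.mp h)).differentiableAt)
      refine hd.congr_of_eventuallyEq ?_
      filter_upwards [(spectrum.isOpen_resolventSet A).mem_nhds (not_not.mp h)] with w hw
      exact hFA w hw
  -- F tends to 0 at infinity
  have htendsto : Tendsto F (cobounded ℂ) (nhds 0) := by
    have hev : F =ᶠ[cobounded ℂ] fun z => X.comp (resolvent A z) := by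
      filter_upwards [(spectrum.isBounded A).compl] with z hz
      exact hFA z (not_not.mp hz)
    have h0 : Tendsto (fun z => X.comp (resolvent A z)) (cobounded ℂ) (nhds 0) := by
      have := (resolvent_tendsto_cobounded (𝕜 := ℂ) A)
      have := ((ContinuousLinearMap.compL ℂ H H K X).continuous.tendsto 0).comp this
      simpa [Function.comp_def] using this
    exact h0.congr' hev.symm
  -- F has bounded range
  have hbdd : IsBounded (Set.range F) := by
    obtain ⟨s, hs, hsub⟩ := htendsto.eventually (Metric.closedBall_mem_nhds (0 : H →L[ℂ] K) one_pos)
      |>.exists_mem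
    -- hsub : ∀ z ∈ s, F z ∈ closedBall 0 1, with sᶜ bounded
    have hcompl : IsBounded sᶜ := Bornology.IsCobounded.compl hs
    have himg : IsBounded (F '' closure sᶜ) :=
      ((hcompl.isCompact_closure).image hdiff.continuous).isBounded
    have : Set.range F ⊆ F '' closure sᶜ ∪ Metric.closedBall 0 1 := by
      rintro - ⟨z, rfl⟩
      by_cases hz : z ∈ s
      · exact Set.mem_union_right _ (hsub z hz)
      · exact Set.mem_union_left _ ⟨z, subset_closure hz, rfl⟩
    exact (himg.union Metric.isBounded_closedBall).subset this
  -- Liouville: F is constant, hence 0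
  have hzero : ∀ z : ℂ, F z = 0 := by
    obtain ⟨c, hc⟩ := hdiff.exists_const_forall_eq_of_bounded hbdd
    have : Tendsto (fun _ : ℂ => c) (cobounded ℂ) (nhds 0) := by
      refine htendsto.congr fun z => (hc z)
    have hc0 : c = 0 := tendsto_nhds_unique tendsto_const_nhds this
    intro z; rw [hc z, hc0]
  -- conclude X = 0 by evaluating at a large z
  obtain ⟨z, hz⟩ : ∃ z : ℂ, ‖A‖ * ‖(1 : H →L[ℂ] H)‖ < ‖z‖ := by
    obtain ⟨z, hz⟩ := NormedField.exists_lt_norm ℂ (‖A‖ * ‖(1 : H →L[ℂ] H)‖)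
    exact ⟨z, hz⟩
  have hzA : z ∈ resolventSet ℂ A := spectrum.mem_resolventSet_of_norm_lt_mul hz
  have h1 : X.comp (resolvent A z) = 0 := (hFA z hzA) ▸ hzero z
  have h2 : (resolvent A z).comp (algebraMap ℂ (H →L[ℂ] H) z - A) = 1 := by
    rw [← ContinuousLinearMap.mul_def, resolvent]
    exact Ring.inverse_mul_cancel _ (show IsUnit _ from hzA)
  calc X = X.comp 1 := by rw [one_def, comp_id]
    _ = (X.comp (resolvent A z)).comp (algebraMap ℂ (H →L[ℂ] H) z - A) := by
        rw [comp_assoc, h2]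
    _ = 0 := by rw [h1, zero_comp]
end

section
/- Let T ∈ B(H) for an infinite-dimensional Hilbert space H, and suppose every closed half-space of H is almost-invariant for T (for every closed Y with dim Y = dim(H/Y) = ∞ there is a finite-dimensional M with T Y ⊆ Y + M). Then T = α I + F for some scalar α and finite-rank operator F. -/
open Submodule

noncomputable section AIHS

variable {H : Type*} [NormedAddCommGroup H] [InnerProductSpace ℂ H] [CompleteSpace H]

local notation "⟪" x ", " y "⟫" => @inner ℂ _ _ x y

/-- In a non-finite-dimensional submodule there are two linearly independent vectors. -/
lemma aihs_exists_pair (W : Submodule ℂ H) (hW : ¬ FiniteDimensional ℂ W) :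
    ∃ x ∈ W, ∃ y ∈ W, LinearIndependent ℂ ![x, y] := by
  have hbot : W ≠ ⊥ := by
    rintro rfl; exact hW inferInstance
  obtain ⟨x, hxW, hx0⟩ := Submodule.exists_mem_ne_zero_of_ne_bot hbot
  have hns : ¬ (W ≤ ℂ ∙ x) := by
    intro hle
    exact hW (Submodule.finiteDimensional_of_le hle)
  rw [SetLike.not_le_iff_exists] at hns
  obtain ⟨y, hyW, hy⟩ := hns
  refine ⟨x, hxW, y, hyW, (LinearIndependent.pair_iff' hx0).mpr ?_⟩
  intro a ha
  exact hy (ha ▸ Submodule.smul_mem _ a (Submodule.mem_span_singleton_self x))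

/-- A linear map which fixes every line of `W` is scalar on `W`. -/
lemma aihs_scalar (W : Submodule ℂ H) (hW : ¬ FiniteDimensional ℂ W)
    (S : H →ₗ[ℂ] H) (hS : ∀ e ∈ W, ∃ c : ℂ, S e = c • e) :
    ∃ α : ℂ, ∀ e ∈ W, S e = α • e := by
  obtain ⟨x, hxW, y, hyW, hxy⟩ := aihs_exists_pair W hW
  have key : ∀ u ∈ W, ∀ v ∈ W, LinearIndependent ℂ ![u, v] →
      ∀ cu cv : ℂ, S u = cu • u → S v = cv • v → cu = cv := by
    intro u hu v hv huv cu cv hcu hcv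
    obtain ⟨cw, hcw⟩ := hS (u + v) (W.add_mem hu hv)
    have h0 : (cu - cw) • u + (cv - cw) • v = 0 := by
      have : S (u + v) = cu • u + cv • v := by rw [map_add, hcu, hcv]
      rw [hcw, smul_add] at this
      linear_combination (norm := module) -this
    obtain ⟨h1, h2⟩ := LinearIndependent.pair_iff.mp huv _ _ h0
    rw [sub_eq_zero] at h1 h2
    rw [h1, h2]
  obtain ⟨a, ha⟩ := hS x hxW
  refine ⟨a, fun e he => ?_⟩
  obtain ⟨d, hd⟩ := hS e he
  by_cases hind : LinearIndependent ℂ ![x, e]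
  · rw [hd, key x hxW e he hind a d ha hd]
  · have hx0 : x ≠ 0 := by
      intro h0
      rw [h0] at hxy
      exact (hxy.ne_zero 0) rfl
    rw [LinearIndependent.pair_iff' hx0] at hind
    push_neg at hind
    obtain ⟨t, ht⟩ := hind
    rw [← ht, map_smul, ha, smul_comm]

lemma aihs_caseA (hH : ¬ FiniteDimensional ℂ H) (T : H →L[ℂ] H)
    (V : Submodule ℂ H) (hV : FiniteDimensional ℂ V)
    (hA : ∀ e ∈ Vᗮ, T e ∈ V ⊔ (ℂ ∙ e)) :
    ∃ (α : ℂ) (F : H →L[ℂ] H),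
      FiniteDimensional ℂ (LinearMap.range (F : H →ₗ[ℂ] H)) ∧ T = α • (1 : H →L[ℂ] H) + F := by
  haveI := hV
  have hWinf : ¬ FiniteDimensional ℂ (Vᗮ : Submodule ℂ H) := by
    intro hfin
    have hsup : V ⊔ Vᗮ = ⊤ := Submodule.sup_orthogonal_of_hasOrthogonalProjection
    haveI : FiniteDimensional ℂ (⊤ : Submodule ℂ H) := hsup ▸
      (inferInstance : FiniteDimensional ℂ ↥(V ⊔ Vᗮ))
    exact hH ((Submodule.topEquiv (R := ℂ) (M := H)).finiteDimensional)
  set S : H →ₗ[ℂ] H := (T : H →ₗ[ℂ] H) -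
    V.subtype ∘ₗ (orthogonalProjection V : H →L[ℂ] V).toLinearMap ∘ₗ (T : H →ₗ[ℂ] H) with hSdef
  have hSapp : ∀ x, S x = T x - (orthogonalProjection V (T x) : H) := fun x => rfl
  have hSeig : ∀ e ∈ Vᗮ, ∃ c : ℂ, S e = c • e := by
    intro e he
    obtain ⟨v, hv, w, hw, hvw⟩ := Submodule.mem_sup.mp (hA e he)
    obtain ⟨c, rfl⟩ := Submodule.mem_span_singleton.mp hw
    refine ⟨c, ?_⟩
    have hPv : (orthogonalProjection V (T e) : H) = v := by
      rw [← hvw, map_add, map_smul,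
        Submodule.orthogonalProjectionOnto_apply_of_mem_orthogonal he]
      rw [Submodule.coe_add, Submodule.coe_smul]
      simp [Submodule.starProjection_eq_self_iff.mpr hv]
    rw [hSapp, hPv, ← hvw]
    abel
  obtain ⟨α, hα⟩ := aihs_scalar Vᗮ hWinf S hSeig
  refine ⟨α, T - α • 1, ?_, by abel⟩
  have hrange : LinearMap.range ((T - α • (1 : H →L[ℂ] H)) : H →ₗ[ℂ] H) ≤
      V ⊔ Submodule.map ((T - α • (1 : H →L[ℂ] H)) : H →ₗ[ℂ] H) V := by
    rintro _ ⟨x, rfl⟩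
    set p : H := (orthogonalProjection V x : H) with hp
    have hpV : p ∈ V := SetLike.coe_mem _
    set w : H := x - p with hwdef
    have hw : w ∈ Vᗮ := Submodule.sub_starProjection_mem_orthogonal x
    have h1 : T w - (orthogonalProjection V (T w) : H) = α • w := hα w hw
    have h1' : T w - α • w = (orthogonalProjection V (T w) : H) := by
      linear_combination (norm := module) h1
    have hx : x = w + p := by rw [hwdef]; abel
    have h2 : (T - α • (1 : H →L[ℂ] H)) x =
        (orthogonalProjection V (T w) : H) + (T - α • (1 : H →L[ℂ] H)) p := by
      simp only [ContinuousLinearMap.sub_apply, ContinuousLinearMap.smul_apply,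
        ContinuousLinearMap.one_apply]
      rw [← h1']
      conv_lhs => rw [hx]
      rw [map_add, smul_add]
      abel
    change (T - α • (1 : H →L[ℂ] H)) x ∈ _
    rw [h2]
    exact Submodule.add_mem_sup (SetLike.coe_mem _) (Submodule.mem_map_of_mem hpV)
  exact Submodule.finiteDimensional_of_le hrange

variable (T : H →L[ℂ] H)

/-- The orthogonal defect of `T e` relative to `V ⊔ ℂ∙e`. -/
def aihsF (V : Submodule ℂ H) (hV : FiniteDimensional ℂ V) (e : H) : H :=
  letI := hV
  T e - (orthogonalProjection (V ⊔ (ℂ ∙ e)) (T e) : H)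

variable (hB : ∀ V : Submodule ℂ H, FiniteDimensional ℂ ↥V →
    ∃ e, e ∈ Vᗮ ∧ T e ∉ V ⊔ (ℂ ∙ e))

/-- The increasing sequence of finite-dimensional "used up" subspaces. -/
def aihsSt : ℕ → {V : Submodule ℂ H // FiniteDimensional ℂ ↥V}
  | 0 => ⟨⊥, inferInstance⟩
  | n+1 =>
    let p := aihsSt n
    let e := (hB p.1 p.2).choose
    ⟨p.1 ⊔ (ℂ ∙ e) ⊔ (ℂ ∙ (T e)) ⊔ (ℂ ∙ aihsF T p.1 p.2 e), by
      haveI := p.2; infer_instance⟩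

def aihsE (n : ℕ) : H := (hB (aihsSt T hB n).1 (aihsSt T hB n).2).choose

def aihsFv (n : ℕ) : H := aihsF T (aihsSt T hB n).1 (aihsSt T hB n).2 (aihsE T hB n)

include T hB in
lemma aihs_caseB (hH : ¬ FiniteDimensional ℂ H)
    (h : ∀ Y : Submodule ℂ H, IsClosed (Y : Set H) →
      ¬ FiniteDimensional ℂ Y → ¬ FiniteDimensional ℂ (H ⧸ Y) →
      ∃ M : Submodule ℂ H, FiniteDimensional ℂ M ∧ ∀ y ∈ Y, T y ∈ Y ⊔ M) :
    False := by
  set e : ℕ → H := aihsE T hB with he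
  set f : ℕ → H := aihsFv T hB with hf
  set V : ℕ → Submodule ℂ H := fun n => (aihsSt T hB n).1 with hV
  have hVfin : ∀ n, FiniteDimensional ℂ (V n) := fun n => (aihsSt T hB n).2
  set U : ℕ → Submodule ℂ H := fun n => V n ⊔ (ℂ ∙ e n) with hU
  have hEspec : ∀ n, e n ∈ (V n)ᗮ ∧ T (e n) ∉ U n :=
    fun n => (hB (aihsSt T hB n).1 (aihsSt T hB n).2).choose_spec
  have hVsucc : ∀ n, V (n+1) = V n ⊔ (ℂ ∙ e n) ⊔ (ℂ ∙ (T (e n))) ⊔ (ℂ ∙ f n) :=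
    fun n => rfl
  have hle : ∀ n, V n ≤ V (n+1) := by
    intro n
    rw [hVsucc]
    exact le_sup_of_le_left (le_sup_of_le_left le_sup_left)
  have hmono : ∀ {i n : ℕ}, i ≤ n → V i ≤ V n := by
    intro i n hin
    induction n, hin using Nat.le_induction with
    | base => exact le_rfl
    | succ n hin ih => exact ih.trans (hle n)
  have hEV : ∀ {i n}, i < n → e i ∈ V n := by
    intro i n hin
    refine hmono hin ?_
    rw [hVsucc]
    exact Submodule.mem_sup_left (Submodule.mem_sup_left
      (Submodule.mem_sup_right (Submodule.mem_span_singleton_self _)))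
  have hTV : ∀ {i n}, i < n → T (e i) ∈ V n := by
    intro i n hin
    refine hmono hin ?_
    rw [hVsucc]
    exact Submodule.mem_sup_left (Submodule.mem_sup_right
      (Submodule.mem_span_singleton_self _))
  have hFV : ∀ {i n}, i < n → f i ∈ V n := by
    intro i n hin
    refine hmono hin ?_
    rw [hVsucc]
    exact Submodule.mem_sup_right (Submodule.mem_span_singleton_self _)
  have hFU : ∀ n, f n ∈ (U n)ᗮ := by
    intro n
    haveI := hVfin n
    exact Submodule.sub_starProjection_mem_orthogonal (K := U n) (T (e n))
  have hFproj : ∀ n, T (e n) - f n ∈ U n := by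
    intro n
    haveI := hVfin n
    have : T (e n) - f n = (orthogonalProjection (U n) (T (e n)) : H) := by
      simp [hf, aihsFv, aihsF, hU, he, hV]
    rw [this]
    exact SetLike.coe_mem _
  have hF0 : ∀ n, f n ≠ 0 := by
    intro n h0
    apply (hEspec n).2
    have := hFproj n
    rw [h0, sub_zero] at this
    exact this
  have hE0 : ∀ n, e n ≠ 0 := by
    intro n h0
    apply (hEspec n).2
    rw [h0, map_zero]
    exact zero_mem _
  have hEU : ∀ {i n}, i ≤ n → e i ∈ U n := by
    intro i n hin
    rcases lt_or_eq_of_le hin with hlt | rfl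
    · exact Submodule.mem_sup_left (hEV hlt)
    · exact Submodule.mem_sup_right (Submodule.mem_span_singleton_self _)
  have hfe : ∀ i n, ⟪f n, e i⟫ = 0 := by
    intro i n
    rcases le_or_gt i n with hin | hni
    · exact Submodule.inner_left_of_mem_orthogonal (hEU hin) (hFU n)
    · exact (Submodule.mem_orthogonal _ _).mp (hEspec i).1 (f n) (hFV hni)
  have hee : ∀ {i n}, i < n → ⟪e n, e i⟫ = 0 := by
    intro i n hin
    exact Submodule.inner_left_of_mem_orthogonal (hEV hin) (hEspec n).1
  have hff : ∀ {i n}, i < n → ⟪f n, f i⟫ = 0 := by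
    intro i n hin
    exact Submodule.inner_left_of_mem_orthogonal (Submodule.mem_sup_left (hFV hin)) (hFU n)
  have hfT : ∀ {i n}, i < n → ⟪f n, T (e i)⟫ = 0 := by
    intro i n hin
    exact Submodule.inner_left_of_mem_orthogonal (Submodule.mem_sup_left (hTV hin)) (hFU n)
  have hfTdiag : ∀ n, ⟪f n, T (e n)⟫ ≠ 0 := by
    intro n
    have h1 : ⟪f n, T (e n) - f n⟫ = 0 :=
      Submodule.inner_left_of_mem_orthogonal (hFproj n) (hFU n)
    rw [inner_sub_right, sub_eq_zero] at h1
    rw [h1]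
    exact inner_self_ne_zero.mpr (hF0 n)
  -- the half space
  set K : Submodule ℂ H := Submodule.span ℂ (Set.range e) with hK
  set Y : Submodule ℂ H := K.topologicalClosure with hY
  have hYclosed : IsClosed (Y : Set H) := Submodule.isClosed_topologicalClosure K
  have heY : ∀ n, e n ∈ Y :=
    fun n => K.le_topologicalClosure (Submodule.subset_span (Set.mem_range_self n))
  have hEind : LinearIndependent ℂ e := by
    refine linearIndependent_of_ne_zero_of_inner_eq_zero hE0 ?_
    intro i j hij
    rcases hij.lt_or_gt with hlt | hlt
    · rw [← inner_conj_symm, hee hlt, map_zero]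
    · exact hee hlt
  have hFind : LinearIndependent ℂ f := by
    refine linearIndependent_of_ne_zero_of_inner_eq_zero hF0 ?_
    intro i j hij
    rcases hij.lt_or_gt with hlt | hlt
    · rw [← inner_conj_symm, hff hlt, map_zero]
    · exact hff hlt
  have hYinf : ¬ FiniteDimensional ℂ Y := by
    intro hfin
    have : LinearIndependent ℂ (fun n => (⟨e n, heY n⟩ : Y)) := by
      apply LinearIndependent.of_comp Y.subtype
      exact hEind
    exact Module.Finite.not_linearIndependent_of_infinite _ this
  have hfY : ∀ n, f n ∈ Yᗮ := by
    intro n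
    have hKo : f n ∈ Kᗮ := by
      rw [Submodule.mem_orthogonal]
      intro u hu
      induction hu using Submodule.span_induction with
      | mem x hx =>
        obtain ⟨i, rfl⟩ := hx
        rw [← inner_conj_symm, hfe i n, map_zero]
      | zero => exact inner_zero_left _
      | add x y _ _ hx hy => rw [inner_add_left, hx, hy, add_zero]
      | smul c x _ hx => rw [inner_smul_left, hx, mul_zero]
    have hYle : Y ≤ Kᗮᗮ :=
      K.topologicalClosure_minimal K.le_orthogonal_orthogonal Kᗮ.isClosed_orthogonal
    exact Submodule.orthogonal_le hYle (Submodule.le_orthogonal_orthogonal Kᗮ hKo)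
  have hQinf : ¬ FiniteDimensional ℂ (H ⧸ Y) := by
    intro hfin
    have hdisj : Disjoint (Submodule.span ℂ (Set.range f)) (LinearMap.ker Y.mkQ) := by
      rw [Submodule.ker_mkQ]
      refine Disjoint.mono_left ?_ (Submodule.orthogonal_disjoint Y).symm
      rw [Submodule.span_le]
      rintro _ ⟨n, rfl⟩
      exact hfY n
    have := hFind.map hdisj
    exact Module.Finite.not_linearIndependent_of_infinite _ this
  obtain ⟨M, hMfin, hTY⟩ := h Y hYclosed hYinf hQinf
  haveI := hMfin
  set k : ℕ := Module.finrank ℂ M with hk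
  have hmem : ∀ j : Fin (k+1), T (e j) ∈ Y ⊔ M := fun j => hTY _ (heY j)
  choose y hy m hm hsum using fun j => Submodule.mem_sup.mp (hmem j)
  set A : Matrix (Fin (k+1)) (Fin (k+1)) ℂ := Matrix.of fun i j => ⟪f i, m j⟫ with hA
  have hAeq : ∀ i j, A i j = ⟪f i, T (e j)⟫ := by
    intro i j
    rw [← hsum j, inner_add_right]
    have : ⟪f (i : ℕ), y j⟫ = 0 :=
      Submodule.inner_left_of_mem_orthogonal (hy j) (hfY i)
    rw [this, zero_add]
    rfl
  have htri : A.BlockTriangular id := by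
    intro i j hji
    rw [hAeq]
    exact hfT hji
  have hdet : A.det ≠ 0 := by
    rw [Matrix.det_of_upperTriangular htri]
    refine Finset.prod_ne_zero_iff.mpr fun i _ => ?_
    rw [hAeq]
    exact hfTdiag i
  have hmulinj : Function.Injective A.mulVec :=
    Matrix.mulVec_injective_iff_isUnit.mpr
      ((Matrix.isUnit_iff_isUnit_det A).mpr (isUnit_iff_ne_zero.mpr hdet))
  have hind : LinearIndependent ℂ (fun j : Fin (k+1) => (⟨m j, hm j⟩ : M)) := by
    rw [Fintype.linearIndependent_iff]
    intro g hg
    have hg' : ∑ j, g j • m j = 0 := by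
      have := congrArg (M.subtype) hg
      simpa using this
    have hAg : A.mulVec g = 0 := by
      funext i
      have h0 : ⟪f (i : ℕ), ∑ j, g j • m j⟫ = 0 := by rw [hg', inner_zero_right]
      rw [inner_sum] at h0
      simp_rw [inner_smul_right] at h0
      simpa [Matrix.mulVec, dotProduct, mul_comm, hA] using h0
    have : g = 0 := hmulinj (by rw [hAg, Matrix.mulVec_zero])
    intro i
    rw [this]
    rfl
  have hcard := hind.fintype_card_le_finrank
  rw [Fintype.card_fin] at hcard
  omega

end AIHS

/-- If every closed half-space of an infinite-dimensional Hilbert space `H` is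
almost-invariant for `T ∈ B(H)`, then `T = α I + F` for some scalar `α` and
finite-rank operator `F`. -/
theorem all_half_spaces_almost_invariant_implies_scalar_plus_finite_rank
    {H : Type*} [NormedAddCommGroup H] [InnerProductSpace ℂ H] [CompleteSpace H]
    (hH : ¬ FiniteDimensional ℂ H) (T : H →L[ℂ] H)
    (h : ∀ Y : Submodule ℂ H, IsClosed (Y : Set H) →
      ¬ FiniteDimensional ℂ Y → ¬ FiniteDimensional ℂ (H ⧸ Y) →
      ∃ M : Submodule ℂ H, FiniteDimensional ℂ M ∧ ∀ y ∈ Y, T y ∈ Y ⊔ M) :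
    ∃ (α : ℂ) (F : H →L[ℂ] H),
      FiniteDimensional ℂ (LinearMap.range (F : H →ₗ[ℂ] H)) ∧ T = α • (1 : H →L[ℂ] H) + F := by
  by_cases hA : ∃ V : Submodule ℂ H, FiniteDimensional ℂ ↥V ∧ ∀ e ∈ Vᗮ, T e ∈ V ⊔ (ℂ ∙ e)
  · obtain ⟨V, hV, hAV⟩ := hA
    exact aihs_caseA hH T V hV hAV
  · push_neg at hA
    exact (aihs_caseB T hA hH h).elim
end
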